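/- arXiv:2511.18060 — 12 statements merged into one kernel-verified Lean document; each statement's English description precedes it below -/
import Mathlib

section
/- Let d ≥ 1 and let π, ρ : ℝ^d → (0,∞) be twice continuously differentiable functions, and let a ∈ ℝ. Define v := π^{1−a} ρ^{a} (pointwise powers) and w := ∇log(ρ/π). Then pointwise on ℝ^d one has the identity ∇·( v ∇log(v/π) ) = a · π^{1−a} ρ^{a−1} ( ∇·( ρ ∇log(ρ/π) ) + (a−1) ρ |w|² ). (With a = e^{γ}, this is the key identity expressing the Wasserstein operator applied to the pre–Fisher–Rao density in terms of the post–Fisher–Rao density in the proof of the W-FR split PDE.) -/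
/-- Divergence of a vector field on `ℝ^d`: `∇·F (x) = ∑ i ∂_i F_i (x)`. -/
noncomputable def vecDiv {d : ℕ} (F : EuclideanSpace ℝ (Fin d) → EuclideanSpace ℝ (Fin d))
    (x : EuclideanSpace ℝ (Fin d)) : ℝ :=
  ∑ i, fderiv ℝ F x (EuclideanSpace.single i 1) i

lemma toDual_symm_comp {d : ℕ} (L : StrongDual ℝ (EuclideanSpace ℝ (Fin d))) (i : Fin d) :
    ((InnerProductSpace.toDual ℝ (EuclideanSpace ℝ (Fin d))).symm L) i
      = L (EuclideanSpace.single i 1) := by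
  have h := InnerProductSpace.toDual_symm_apply (𝕜 := ℝ)
    (E := EuclideanSpace ℝ (Fin d)) (y := L) (x := EuclideanSpace.single i 1)
  rw [← h, EuclideanSpace.inner_single_right]
  simp

/-- For positive `C²` functions `π, ρ` on `ℝ^d` and `a ∈ ℝ`, setting
`v := π^{1-a} ρ^a` and `w := ∇ log (ρ/π)`, one has pointwise
`∇·(v ∇log(v/π)) = a π^{1-a} ρ^{a-1} ( ∇·(ρ ∇log(ρ/π)) + (a-1) ρ |w|² )`. -/
theorem wasserstein_operator_fisher_rao_identity
    (d : ℕ) (hd : 1 ≤ d)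
    (π ρ : EuclideanSpace ℝ (Fin d) → ℝ)
    (hπpos : ∀ x, 0 < π x) (hρpos : ∀ x, 0 < ρ x)
    (hπ : ContDiff ℝ 2 π) (hρ : ContDiff ℝ 2 ρ)
    (a : ℝ)
    (v : EuclideanSpace ℝ (Fin d) → ℝ)
    (hv : v = fun x => π x ^ (1 - a) * ρ x ^ a)
    (w : EuclideanSpace ℝ (Fin d) → EuclideanSpace ℝ (Fin d))
    (hw : w = fun x => gradient (fun y => Real.log (ρ y / π y)) x) :
    ∀ x : EuclideanSpace ℝ (Fin d),
      vecDiv (fun y => v y • gradient (fun z => Real.log (v z / π z)) y) x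
        = a * (π x ^ (1 - a) * ρ x ^ (a - 1)) *
          (vecDiv (fun y => ρ y • gradient (fun z => Real.log (ρ z / π z)) y) x
            + (a - 1) * ρ x * ‖w x‖ ^ 2) := by
  intro x
  have hπd : ∀ y, DifferentiableAt ℝ π y := fun y => (hπ.differentiable two_ne_zero).differentiableAt
  have hρd : ∀ y, DifferentiableAt ℝ ρ y := fun y => (hρ.differentiable two_ne_zero).differentiableAt
  -- derivative of log (ρ/π)
  have hlogfun : (fun z => Real.log (ρ z / π z)) = fun z => Real.log (ρ z) - Real.log (π z) :=
    funext fun z => Real.log_div (hρpos z).ne' (hπpos z).ne'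
  have hL : ∀ y, HasFDerivAt (fun z => Real.log (ρ z / π z))
      ((ρ y)⁻¹ • fderiv ℝ ρ y - (π y)⁻¹ • fderiv ℝ π y) y := by
    intro y
    rw [hlogfun]
    exact ((hρd y).hasFDerivAt.log (hρpos y).ne').sub ((hπd y).hasFDerivAt.log (hπpos y).ne')
  have hgradρπ : ∀ y, gradient (fun z => Real.log (ρ z / π z)) y
      = (InnerProductSpace.toDual ℝ (EuclideanSpace ℝ (Fin d))).symm
          ((ρ y)⁻¹ • fderiv ℝ ρ y - (π y)⁻¹ • fderiv ℝ π y) := by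
    intro y
    show (InnerProductSpace.toDual ℝ (EuclideanSpace ℝ (Fin d))).symm _ = _
    rw [(hL y).fderiv]
  -- log (v/π) = a * log (ρ/π)
  have hlogv : (fun z => Real.log (v z / π z)) = fun z => a * Real.log (ρ z / π z) := by
    funext z
    simp only [hv]
    rw [Real.log_div (hρpos z).ne' (hπpos z).ne']
    have h1 : π z ^ (1 - a) * ρ z ^ a / π z = π z ^ (1 - a) * ρ z ^ a * (π z)⁻¹ := by ring
    have n1 : π z ^ (1 - a) ≠ 0 := (Real.rpow_pos_of_pos (hπpos z) _).ne'
    have n2 : ρ z ^ a ≠ 0 := (Real.rpow_pos_of_pos (hρpos z) _).ne'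
    rw [h1, Real.log_mul (mul_ne_zero n1 n2) (inv_ne_zero (hπpos z).ne'),
      Real.log_mul n1 n2,
      Real.log_rpow (hπpos z), Real.log_rpow (hρpos z), Real.log_inv]
    ring
  -- gradient of log (v/π)
  have hgradv : ∀ y, gradient (fun z => Real.log (v z / π z)) y
      = a • gradient (fun z => Real.log (ρ z / π z)) y := by
    intro y
    rw [hlogv]
    show (InnerProductSpace.toDual ℝ (EuclideanSpace ℝ (Fin d))).symm _
      = a • (InnerProductSpace.toDual ℝ (EuclideanSpace ℝ (Fin d))).symm _
    rw [((hL y).const_mul a).fderiv]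
    rw [map_smulₛₗ]
    simp [(hL y).fderiv]
  -- set up c and F
  set F : EuclideanSpace ℝ (Fin d) → EuclideanSpace ℝ (Fin d) :=
    fun y => ρ y • gradient (fun z => Real.log (ρ z / π z)) y with hF
  set c : EuclideanSpace ℝ (Fin d) → ℝ :=
    fun y => a * (π y ^ (1 - a) * ρ y ^ (a - 1)) with hc
  have hfield : (fun y => v y • gradient (fun z => Real.log (v z / π z)) y)
      = fun y => c y • F y := by
    funext y
    rw [hgradv y]
    simp only [hv, hc, hF, smul_smul]
    congr 1
    have : ρ y ^ a = ρ y ^ (a - 1) * ρ y := by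
      rw [Real.rpow_sub_one (hρpos y).ne', div_mul_cancel₀ _ (hρpos y).ne']
    rw [this]; ring
  -- differentiability of F
  have hcd1 : ContDiff ℝ 1 (fderiv ℝ ρ) := hρ.fderiv_right (by norm_num)
  have hcd2 : ContDiff ℝ 1 (fderiv ℝ π) := hπ.fderiv_right (by norm_num)
  have hFcomp : ∀ i, (fun y => F y i)
      = fun y => ρ y * ((ρ y)⁻¹ * fderiv ℝ ρ y (EuclideanSpace.single i 1)
        - (π y)⁻¹ * fderiv ℝ π y (EuclideanSpace.single i 1)) := by
    intro i
    funext y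
    simp only [hF, PiLp.smul_apply, smul_eq_mul, hgradρπ y, toDual_symm_comp]
    simp
  have hFdiff : DifferentiableAt ℝ F x := by
    rw [differentiableAt_euclidean]
    intro i
    rw [hFcomp i]
    have h1 : DifferentiableAt ℝ (fun y => fderiv ℝ ρ y (EuclideanSpace.single i 1)) x :=
      ((hcd1.differentiable one_ne_zero).differentiableAt).clm_apply (differentiableAt_const _)
    have h2 : DifferentiableAt ℝ (fun y => fderiv ℝ π y (EuclideanSpace.single i 1)) x :=
      ((hcd2.differentiable one_ne_zero).differentiableAt).clm_apply (differentiableAt_const _)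
    exact (hρd x).mul ((((hρd x).inv (hρpos x).ne').mul h1).sub
      (((hπd x).inv (hπpos x).ne').mul h2))
  -- derivative of c
  set Lx : EuclideanSpace ℝ (Fin d) →L[ℝ] ℝ :=
    (ρ x)⁻¹ • fderiv ℝ ρ x - (π x)⁻¹ • fderiv ℝ π x with hLx
  have hcder : HasFDerivAt c (((a - 1) * c x) • Lx) x := by
    have h1 : HasFDerivAt (fun y => π y ^ (1 - a))
        (((1 - a) * π x ^ (1 - a - 1)) • fderiv ℝ π x) x :=
      (hπd x).hasFDerivAt.rpow_const (Or.inl (hπpos x).ne')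
    have h2 : HasFDerivAt (fun y => ρ y ^ (a - 1))
        (((a - 1) * ρ x ^ (a - 1 - 1)) • fderiv ℝ ρ x) x :=
      (hρd x).hasFDerivAt.rpow_const (Or.inl (hρpos x).ne')
    have h3 := (h1.mul h2).const_mul a
    refine h3.congr_fderiv ?_
    rw [hLx, hc]
    have e1 : π x ^ (1 - a - 1) = π x ^ (1 - a) / π x := Real.rpow_sub_one (hπpos x).ne' _
    have e2 : ρ x ^ (a - 1 - 1) = ρ x ^ (a - 1) / ρ x := Real.rpow_sub_one (hρpos x).ne' _
    rw [e1, e2, div_eq_mul_inv, div_eq_mul_inv]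
    module
  -- the product-rule fderiv
  have hprod : fderiv ℝ (fun y => c y • F y) x
      = c x • fderiv ℝ F x + (((a - 1) * c x) • Lx).smulRight (F x) := by
    rw [show (fun y => c y • F y) = c • F from rfl, fderiv_smul hcder.differentiableAt hFdiff, hcder.fderiv]
  -- components of w
  have hwx : w x = (InnerProductSpace.toDual ℝ (EuclideanSpace ℝ (Fin d))).symm Lx := by
    rw [hw]; exact hgradρπ x
  have hLxapp : ∀ i, Lx (EuclideanSpace.single i 1) = w x i := by
    intro i
    rw [hwx, toDual_symm_comp]
  have hFx : ∀ i, F x i = ρ x * w x i := by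
    intro i
    simp only [hF, hw, PiLp.smul_apply, smul_eq_mul]
  have hnorm : ∑ i, w x i * w x i = ‖w x‖ ^ 2 := by
    rw [← real_inner_self_eq_norm_sq, PiLp.inner_apply]
    simp [RCLike.inner_apply, sq]
  -- final computation
  rw [hfield]
  unfold vecDiv
  rw [hprod]
  simp only [ContinuousLinearMap.add_apply, ContinuousLinearMap.coe_smul', Pi.smul_apply,
    ContinuousLinearMap.smulRight_apply, ContinuousLinearMap.smul_apply, PiLp.add_apply,
    PiLp.smul_apply, smul_eq_mul]
  rw [Finset.sum_add_distrib, ← Finset.mul_sum]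
  have hkey : ∑ i, ((a - 1) * c x) * Lx (EuclideanSpace.single i 1) * F x i
      = (a - 1) * c x * ρ x * ‖w x‖ ^ 2 := by
    calc ∑ i, ((a - 1) * c x) * Lx (EuclideanSpace.single i 1) * F x i
        = ∑ i, ((a - 1) * c x * ρ x) * (w x i * w x i) := by
          refine Finset.sum_congr rfl fun i _ => ?_
          rw [hLxapp i, hFx i]; ring
      _ = (a - 1) * c x * ρ x * ‖w x‖ ^ 2 := by rw [← Finset.mul_sum, hnorm]
  rw [hkey, hc]
  ring
end

section
/- Let d ≥ 1, let C_π be a symmetric positive definite d×d real matrix, let T > 0, let M : [0,T] → ℝ^{d×d} be continuous symmetric-matrix-valued, let m_0, m_π ∈ ℝ^d, and let C : [0,T] → ℝ^{d×d} be a differentiable matrix-valued function with C(0) = C_0, such that C_t − C_π is invertible for all t ∈ [0,T] and dC_t/dt = −C_t C_π^{-1}(I − 2M_t C_π^{-1})C_t − (I − (1/2)C_π + 2M_t)C_π^{-1}C_t − C_t C_π^{-1}(I − (1/2)C_π + 2M_t) + 2(I + M_t). Define m_t := m_π + (C_t − C_π) e^{t C_π^{-1}} (C_0 − C_π)^{-1}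 (m_0 − m_π). Then m(0) = m_0 and, for every t ∈ [0,T], m is differentiable at t with dm_t/dt = −( C_t C_π^{-1}(I − 2M_t C_π^{-1}) + (I + 2M_t) C_π^{-1} )(m_t − m_π). In particular the solution m_t of the mean ODE is independent of M except through C_t. -/
open Matrix Set

attribute [local instance] Matrix.frobeniusNormedAddCommGroup Matrix.frobeniusNormedSpace
attribute [local instance] Matrix.frobeniusNormedRing Matrix.frobeniusNormedAlgebra

theorem key_identity (d : ℕ) (Cπ E C M : Matrix (Fin d) (Fin d) ℝ)
    (hE1 : E * Cπ = 1) (hE2 : Cπ * E = 1) :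
    (-(C * E * (1 - (2 : ℝ) • (M * E)) * C)
          - (1 - (1 / 2 : ℝ) • Cπ + (2 : ℝ) • M) * E * C
          - C * E * (1 - (1 / 2 : ℝ) • Cπ + (2 : ℝ) • M)
          + (2 : ℝ) • (1 + M)) + (C - Cπ) * E
      = -((C * E * (1 - (2 : ℝ) • (M * E)) + (1 + (2 : ℝ) • M) * E) * (C - Cπ)) := by
  have hE1' : ∀ x : Matrix (Fin d) (Fin d) ℝ, E * (Cπ * x) = x := by
    intro x; rw [← mul_assoc, hE1, one_mul]
  have hE2' : ∀ x : Matrix (Fin d) (Fin d) ℝ, Cπ * (E * x) = x := by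
    intro x; rw [← mul_assoc, hE2, one_mul]
  simp only [mul_sub, sub_mul, mul_add, add_mul, smul_mul_assoc, mul_smul_comm,
    mul_assoc, hE1, hE2, hE1', hE2', mul_one, one_mul, smul_add, neg_sub, neg_add, neg_neg]
  module

/-- Explicit solution of the mean ODE of the perturbed
Wasserstein–Fisher–Rao dynamics in the multivariate Gaussian case; the mean solution is
independent of the perturbation `M` except through the covariance `C`. -/
theorem mean_ode_explicit_solution
    (d : ℕ) (hd : 1 ≤ d)
    (Cπ : Matrix (Fin d) (Fin d) ℝ) (hCπ : Cπ.PosDef)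
    (T : ℝ) (hT : 0 < T)
    (M : ℝ → Matrix (Fin d) (Fin d) ℝ)
    (hMc : ContinuousOn M (Icc 0 T)) (hMs : ∀ t ∈ Icc (0 : ℝ) T, (M t).IsSymm)
    (m₀ mπ : Fin d → ℝ)
    (C₀ : Matrix (Fin d) (Fin d) ℝ)
    (C : ℝ → Matrix (Fin d) (Fin d) ℝ)
    (hC0 : C 0 = C₀)
    (hCinv : ∀ t ∈ Icc (0 : ℝ) T, IsUnit (C t - Cπ))
    (hCode : ∀ t ∈ Icc (0 : ℝ) T,
      HasDerivAt C
        (-(C t * Cπ⁻¹ * (1 - (2 : ℝ) • (M t * Cπ⁻¹)) * C t)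
          - (1 - (1 / 2 : ℝ) • Cπ + (2 : ℝ) • M t) * Cπ⁻¹ * C t
          - C t * Cπ⁻¹ * (1 - (1 / 2 : ℝ) • Cπ + (2 : ℝ) • M t)
          + (2 : ℝ) • (1 + M t)) t)
    (m : ℝ → Fin d → ℝ)
    (hm : ∀ t, m t = mπ + (C t - Cπ) *ᵥ
      (NormedSpace.exp (t • Cπ⁻¹) *ᵥ ((C₀ - Cπ)⁻¹ *ᵥ (m₀ - mπ)))) :
    m 0 = m₀ ∧
      ∀ t ∈ Icc (0 : ℝ) T,
        HasDerivAt m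
          (-((C t * Cπ⁻¹ * (1 - (2 : ℝ) • (M t * Cπ⁻¹))
              + (1 + (2 : ℝ) • M t) * Cπ⁻¹) *ᵥ (m t - mπ))) t := by
  have h0T : (0 : ℝ) ∈ Icc (0 : ℝ) T := ⟨le_refl 0, hT.le⟩
  have hCπdet : IsUnit Cπ.det := isUnit_iff_ne_zero.2 hCπ.det_pos.ne'
  have hE1 : Cπ⁻¹ * Cπ = 1 := Matrix.nonsing_inv_mul Cπ hCπdet
  have hE2 : Cπ * Cπ⁻¹ = 1 := Matrix.mul_nonsing_inv Cπ hCπdet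
  set v₀ : Fin d → ℝ := (C₀ - Cπ)⁻¹ *ᵥ (m₀ - mπ) with hv₀
  have hC₀inv : IsUnit (C₀ - Cπ) := by
    have := hCinv 0 h0T; rwa [hC0] at this
  -- m 0 = m₀
  have hm0 : m 0 = m₀ := by
    have := hm 0
    rw [hC0, zero_smul, NormedSpace.exp_zero, Matrix.one_mulVec,
      Matrix.mulVec_mulVec, Matrix.mul_nonsing_inv _ ((Matrix.isUnit_iff_isUnit_det _).1 hC₀inv),
      Matrix.one_mulVec] at this
    rw [this]; abel
  refine ⟨hm0, fun t ht => ?_⟩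
  -- the continuous linear map A ↦ A *ᵥ v₀
  let Llin : Matrix (Fin d) (Fin d) ℝ →ₗ[ℝ] (Fin d → ℝ) :=
    { toFun := fun A => A *ᵥ v₀
      map_add' := fun A B => Matrix.add_mulVec A B v₀
      map_smul' := fun c A => Matrix.smul_mulVec c A v₀ }
  let L : Matrix (Fin d) (Fin d) ℝ →L[ℝ] (Fin d → ℝ) := LinearMap.toContinuousLinearMap Llin
  -- g u = (C u - Cπ) * exp(u • Cπ⁻¹)
  set f : ℝ → Matrix (Fin d) (Fin d) ℝ := fun u => NormedSpace.exp (u • Cπ⁻¹) with hf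
  set g : ℝ → Matrix (Fin d) (Fin d) ℝ := fun u => (C u - Cπ) * f u with hg
  have hfd : HasDerivAt f (Cπ⁻¹ * f t) t := hasDerivAt_exp_smul_const' Cπ⁻¹ t
  set C' : Matrix (Fin d) (Fin d) ℝ :=
    (-(C t * Cπ⁻¹ * (1 - (2 : ℝ) • (M t * Cπ⁻¹)) * C t)
      - (1 - (1 / 2 : ℝ) • Cπ + (2 : ℝ) • M t) * Cπ⁻¹ * C t
      - C t * Cπ⁻¹ * (1 - (1 / 2 : ℝ) • Cπ + (2 : ℝ) • M t)
      + (2 : ℝ) • (1 + M t)) with hC'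
  have hgd : HasDerivAt g (C' * f t + (C t - Cπ) * (Cπ⁻¹ * f t)) t :=
    ((hCode t ht).sub_const Cπ).mul hfd
  have hmeq : m = fun u => mπ + L (g u) := by
    funext u
    show m u = mπ + g u *ᵥ v₀
    rw [hm u, hg]
    simp [Matrix.mulVec_mulVec, hf]
  have hmd : HasDerivAt m (L (C' * f t + (C t - Cπ) * (Cπ⁻¹ * f t))) t := by
    rw [hmeq]
    exact (L.hasFDerivAt.comp_hasDerivAt t hgd).const_add mπ
  -- identify the derivative
  have hmt : m t - mπ = g t *ᵥ v₀ := by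
    rw [hm t, hg]
    simp [Matrix.mulVec_mulVec, hf]
  have hmat : C' * f t + (C t - Cπ) * (Cπ⁻¹ * f t)
      = -((C t * Cπ⁻¹ * (1 - (2 : ℝ) • (M t * Cπ⁻¹)) + (1 + (2 : ℝ) • M t) * Cπ⁻¹) * g t) := by
    have hkey := key_identity d Cπ Cπ⁻¹ (C t) (M t) hE1 hE2
    calc C' * f t + (C t - Cπ) * (Cπ⁻¹ * f t)
        = (C' + (C t - Cπ) * Cπ⁻¹) * f t := by rw [add_mul C' ((C t - Cπ) * Cπ⁻¹) (f t), mul_assoc (C t - Cπ) Cπ⁻¹ (f t)]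
      _ = -((C t * Cπ⁻¹ * (1 - (2 : ℝ) • (M t * Cπ⁻¹)) + (1 + (2 : ℝ) • M t) * Cπ⁻¹)
            * (C t - Cπ)) * f t := by rw [hC', hkey]
      _ = _ := by rw [neg_mul, mul_assoc, hg]
  rw [hmt, Matrix.mulVec_mulVec, ← Matrix.neg_mulVec]
  have : L (C' * f t + (C t - Cπ) * (Cπ⁻¹ * f t))
      = (-((C t * Cπ⁻¹ * (1 - (2 : ℝ) • (M t * Cπ⁻¹)) + (1 + (2 : ℝ) • M t) * Cπ⁻¹) * g t)) *ᵥ v₀ := by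
    rw [hmat]; rfl
  exact this ▸ hmd
end

section
/- Let d ≥ 1, let C_π be a symmetric positive definite d×d real matrix, set Γ := C_π^{-1} + (1/2)I, and let C_0 be symmetric positive definite with C_0 − C_π invertible. Assume that for every t ≥ 0 the matrix K_t := e^{Γt}[ (C_0 − C_π)^{-1} + (2I + C_π)^{-1} ] e^{Γt} − (2I + C_π)^{-1} is invertible. Then C_t := C_π + K_t^{-1} satisfies C(0) = C_0 and, for every t ≥ 0, C is differentiable at t with dC_t/dt = −C_t C_π^{-1} C_t + C_t − C_π^{-1} C_t − C_t C_π^{-1} + 2I. (This is the exact covariance evolution of the Wasserstein–Fisher–Rao gradient flow between multivariate Gaussians with target covariance C_π.) -/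
open Matrix Set

attribute [local instance] Matrix.frobeniusNormedAddCommGroup Matrix.frobeniusNormedSpace
attribute [local instance] Matrix.frobeniusNormedRing Matrix.frobeniusNormedAlgebra

/-- Exact covariance evolution of the Wasserstein–Fisher–Rao gradient flow
between multivariate Gaussians with target covariance `Cπ`. -/
theorem wfr_covariance_exact_solution
    (d : ℕ) (hd : 1 ≤ d)
    (Cπ : Matrix (Fin d) (Fin d) ℝ) (hCπ : Cπ.PosDef)
    (Γ : Matrix (Fin d) (Fin d) ℝ) (hΓ : Γ = Cπ⁻¹ + (1 / 2 : ℝ) • 1)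
    (C₀ : Matrix (Fin d) (Fin d) ℝ) (hC₀ : C₀.PosDef) (hC₀π : IsUnit (C₀ - Cπ))
    (K : ℝ → Matrix (Fin d) (Fin d) ℝ)
    (hKdef : ∀ t, K t =
      NormedSpace.exp (t • Γ) * ((C₀ - Cπ)⁻¹ + ((2 : ℝ) • 1 + Cπ)⁻¹) *
        NormedSpace.exp (t • Γ) - ((2 : ℝ) • 1 + Cπ)⁻¹)
    (hK : ∀ t : ℝ, 0 ≤ t → IsUnit (K t))
    (C : ℝ → Matrix (Fin d) (Fin d) ℝ)
    (hC : ∀ t, C t = Cπ + (K t)⁻¹) :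
    C 0 = C₀ ∧
      ∀ t : ℝ, 0 ≤ t →
        HasDerivAt C
          (-(C t * Cπ⁻¹ * C t) + C t - Cπ⁻¹ * C t - C t * Cπ⁻¹ + (2 : ℝ) • 1) t := by
  set B : (Matrix (Fin d) (Fin d) ℝ) := ((2 : ℝ) • 1 + Cπ)⁻¹ with hBdef
  set A : (Matrix (Fin d) (Fin d) ℝ) := (C₀ - Cπ)⁻¹ + B with hAdef
  -- positivity / units facts
  have hS : ((2 : ℝ) • (1 : (Matrix (Fin d) (Fin d) ℝ)) + Cπ).PosDef := by
    have h2 : ((2 : ℝ) • (1 : (Matrix (Fin d) (Fin d) ℝ))) = 1 + 1 := two_smul ℝ (1 : (Matrix (Fin d) (Fin d) ℝ))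
    rw [h2]
    exact (Matrix.PosDef.one.add Matrix.PosDef.one).add hCπ
  have hPdet : IsUnit Cπ.det := isUnit_iff_ne_zero.mpr hCπ.det_pos.ne'
  have hP1 : Cπ * Cπ⁻¹ = 1 := Matrix.mul_nonsing_inv _ hPdet
  have hP2 : Cπ⁻¹ * Cπ = 1 := Matrix.nonsing_inv_mul _ hPdet
  have hSdet : IsUnit ((2 : ℝ) • (1 : (Matrix (Fin d) (Fin d) ℝ)) + Cπ).det :=
    isUnit_iff_ne_zero.mpr hS.det_pos.ne'
  have hSB : ((2 : ℝ) • (1 : (Matrix (Fin d) (Fin d) ℝ)) + Cπ) * B = 1 := Matrix.mul_nonsing_inv _ hSdet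
  -- commutation of Cπ⁻¹ and B
  have hScomm : ((2 : ℝ) • (1 : (Matrix (Fin d) (Fin d) ℝ)) + Cπ) * Cπ = Cπ * ((2 : ℝ) • (1 : (Matrix (Fin d) (Fin d) ℝ)) + Cπ) := by
    rw [add_mul, mul_add, Matrix.smul_mul, Matrix.mul_smul, one_mul, mul_one]
  have hcomm : Cπ⁻¹ * B = B * Cπ⁻¹ := by
    rw [hBdef, ← Matrix.mul_inv_rev, ← Matrix.mul_inv_rev, hScomm]
  -- key identity : Γ B + B Γ = Cπ⁻¹
  have hBkey : Γ * B + B * Γ = Cπ⁻¹ := by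
    have h12 : (1 / 2 : ℝ) • B + (1 / 2 : ℝ) • B = B := by
      rw [← add_smul]; norm_num
    rw [hΓ]
    calc (Cπ⁻¹ + (1 / 2 : ℝ) • 1) * B + B * (Cπ⁻¹ + (1 / 2 : ℝ) • 1)
        = Cπ⁻¹ * B + (1 / 2 : ℝ) • B + (B * Cπ⁻¹ + (1 / 2 : ℝ) • B) := by
          rw [add_mul, mul_add, Matrix.smul_mul, Matrix.mul_smul, one_mul, mul_one]
      _ = Cπ⁻¹ * B + (1 / 2 : ℝ) • B + (Cπ⁻¹ * B + (1 / 2 : ℝ) • B) := by rw [hcomm]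
      _ = Cπ⁻¹ * B + Cπ⁻¹ * B + ((1 / 2 : ℝ) • B + (1 / 2 : ℝ) • B) := by abel
      _ = Cπ⁻¹ * B + Cπ⁻¹ * B + (Cπ⁻¹ * Cπ) * B := by rw [h12, hP2, one_mul]
      _ = Cπ⁻¹ * (B + B + Cπ * B) := by noncomm_ring
      _ = Cπ⁻¹ * (((2 : ℝ) • (1 : Matrix (Fin d) (Fin d) ℝ) + Cπ) * B) := by
          rw [add_mul, Matrix.smul_mul, one_mul, two_smul]
      _ = Cπ⁻¹ := by rw [hSB, mul_one]
  refine ⟨?_, ?_⟩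
  · -- initial condition
    have hK0 : K 0 = (C₀ - Cπ)⁻¹ := by
      rw [hKdef 0, zero_smul, NormedSpace.exp_zero, one_mul, mul_one, hAdef]
      abel
    rw [hC 0, hK0, Matrix.nonsing_inv_nonsing_inv _
      ((Matrix.isUnit_iff_isUnit_det _).mp hC₀π)]
    abel
  · intro t ht
    set M : (Matrix (Fin d) (Fin d) ℝ) := (K t)⁻¹ with hMdef
    have hKt : IsUnit (K t) := hK t ht
    have hKtdet : IsUnit (K t).det := (Matrix.isUnit_iff_isUnit_det _).mp hKt
    have hM1 : M * K t = 1 := Matrix.nonsing_inv_mul _ hKtdet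
    have hM2 : K t * M = 1 := Matrix.mul_nonsing_inv _ hKtdet
    -- derivative of K
    have hE : HasDerivAt (fun s : ℝ => NormedSpace.exp (s • Γ))
        (NormedSpace.exp (t • Γ) * Γ) t := hasDerivAt_exp_smul_const Γ t
    have hE' : HasDerivAt (fun s : ℝ => NormedSpace.exp (s • Γ))
        (Γ * NormedSpace.exp (t • Γ)) t := hasDerivAt_exp_smul_const' Γ t
    have hKderiv : HasDerivAt K
        (Γ * NormedSpace.exp (t • Γ) * A * NormedSpace.exp (t • Γ)
          + NormedSpace.exp (t • Γ) * A * (NormedSpace.exp (t • Γ) * Γ)) t := by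
      have h := ((hE'.mul_const A).mul hE).sub_const B
      have hfun : (fun s : ℝ => NormedSpace.exp (s • Γ) * A * NormedSpace.exp (s • Γ) - B)
          = K := by
        funext s; rw [hKdef s]
      rw [← hfun]; exact h
    have hEAE : NormedSpace.exp (t • Γ) * A * NormedSpace.exp (t • Γ) = K t + B := by
      rw [hKdef t]; abel
    have hKderiv' : HasDerivAt K (Γ * (K t + B) + (K t + B) * Γ) t := by
      have e1 : Γ * NormedSpace.exp (t • Γ) * A * NormedSpace.exp (t • Γ)
          = Γ * (K t + B) := by rw [← hEAE]; noncomm_ring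
      have e2 : NormedSpace.exp (t • Γ) * A * (NormedSpace.exp (t • Γ) * Γ)
          = (K t + B) * Γ := by rw [← hEAE]; noncomm_ring
      rwa [e1, e2] at hKderiv
    -- derivative of K⁻¹ via Ring.inverse
    obtain ⟨u, hu⟩ := hKt
    have hinvF : HasFDerivAt (Ring.inverse : (Matrix (Fin d) (Fin d) ℝ) → (Matrix (Fin d) (Fin d) ℝ))
        (-(ContinuousLinearMap.mulLeftRight ℝ (Matrix (Fin d) (Fin d) ℝ) ↑u⁻¹ ↑u⁻¹)) (K t) := by
      rw [← hu]; exact hasFDerivAt_ringInverse u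
    have hu' : (↑u⁻¹ : (Matrix (Fin d) (Fin d) ℝ)) = M := by
      rw [hMdef, ← hu, ← Matrix.coe_units_inv]
    have hinv : HasDerivAt (fun s => Ring.inverse (K s))
        (-(M * (Γ * (K t + B) + (K t + B) * Γ) * M)) t := by
      have h := hinvF.comp_hasDerivAt t hKderiv'
      simp only [hu', ContinuousLinearMap.neg_apply, ContinuousLinearMap.mulLeftRight_apply, mul_assoc] at h ⊢; exact h
    have hinv' : HasDerivAt (fun s => (K s)⁻¹)
        (-(M * (Γ * (K t + B) + (K t + B) * Γ) * M)) t := by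
      have hfun : (fun s => Ring.inverse (K s)) = fun s => (K s)⁻¹ := by
        funext s; rw [Matrix.nonsing_inv_eq_ringInverse]
      rwa [hfun] at hinv
    have hCderiv : HasDerivAt C (-(M * (Γ * (K t + B) + (K t + B) * Γ) * M)) t := by
      have hfun : (fun s => Cπ + (K s)⁻¹) = C := by funext s; rw [hC s]
      have h := hinv'.const_add Cπ
      rwa [hfun] at h
    -- algebraic identification of the derivative
    have key : M * (Γ * (K t + B) + (K t + B) * Γ) * M
        = M * Γ + M * Cπ⁻¹ * M + Γ * M := by
      have e1 : M * (Γ * (K t + B) + (K t + B) * Γ) * M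
          = M * Γ * (K t * M) + M * (Γ * B + B * Γ) * M + (M * K t) * (Γ * M) := by
        noncomm_ring
      rw [e1, hM1, hM2, one_mul, mul_one, hBkey]
    have hMG : M * Γ = M * Cπ⁻¹ + (1 / 2 : ℝ) • M := by
      rw [hΓ, mul_add, Matrix.mul_smul, mul_one]
    have hGM : Γ * M = Cπ⁻¹ * M + (1 / 2 : ℝ) • M := by
      rw [hΓ, add_mul, Matrix.smul_mul, one_mul]
    have halg : -(M * (Γ * (K t + B) + (K t + B) * Γ) * M)
        = -(C t * Cπ⁻¹ * C t) + C t - Cπ⁻¹ * C t - C t * Cπ⁻¹ + (2 : ℝ) • 1 := by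
      rw [key, hMG, hGM, hC t]
      have eC : (Cπ + M) * Cπ⁻¹ * (Cπ + M)
          = Cπ + M + M + M * Cπ⁻¹ * M := by
        have : (Cπ + M) * Cπ⁻¹ * (Cπ + M)
            = (Cπ * Cπ⁻¹) * Cπ + (Cπ * Cπ⁻¹) * M + M * (Cπ⁻¹ * Cπ) + M * Cπ⁻¹ * M := by
          noncomm_ring
        rw [this, hP1, hP2, one_mul, one_mul, mul_one]
      have eL : Cπ⁻¹ * (Cπ + M) = 1 + Cπ⁻¹ * M := by rw [mul_add, hP2]
      have eR : (Cπ + M) * Cπ⁻¹ = 1 + M * Cπ⁻¹ := by rw [add_mul, hP1]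
      rw [eC, eL, eR, two_smul ℝ (1 : (Matrix (Fin d) (Fin d) ℝ))]
      have hhalf : (1 / 2 : ℝ) • M + (1 / 2 : ℝ) • M = M := by
        rw [← add_smul]; norm_num
      calc -(M * Cπ⁻¹ + (1 / 2 : ℝ) • M + M * Cπ⁻¹ * M + (Cπ⁻¹ * M + (1 / 2 : ℝ) • M))
          = -(M * Cπ⁻¹ + ((1 / 2 : ℝ) • M + (1 / 2 : ℝ) • M) + M * Cπ⁻¹ * M + Cπ⁻¹ * M) := by
            abel
        _ = -(M * Cπ⁻¹ + M + M * Cπ⁻¹ * M + Cπ⁻¹ * M) := by rw [hhalf]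
        _ = -(Cπ + M + M + M * Cπ⁻¹ * M) + (Cπ + M) - (1 + Cπ⁻¹ * M) - (1 + M * Cπ⁻¹)
            + (1 + 1) := by abel
    rw [← halg]
    exact hCderiv
end

section
/- Let d ≥ 1, let C_π be a symmetric positive definite d×d real matrix, set Γ := C_π^{-1} + (1/2)I, let C_0 be symmetric positive definite with C_0 − C_π invertible, and let T > 0. Assume that for every γ ∈ [0,T] the matrix e^{Γγ}(C_0 − C_π)^{-1}e^{Γγ} + (e^{γ} − 1)C_π^{-1} is invertible. Then Q_γ := C_π + ( e^{Γγ}(C_0 − C_π)^{-1}e^{Γγ} + (e^{γ} − 1)C_π^{-1} )^{-1} satisfies Q_0 = C_0 and, for every γ ∈ [0,T], Q is differentiable at γ with dQ_γ/dγ = −Q_γ C_π^{-1}(I − 2M_γ C_π^{-1})Q_γ − (I − (1/2)C_π + 2M_γ)C_π^{-1}Q_γ − Q_γ C_π^{-1}(I − (1/2)C_π + 2M_γ) + 2(I + M_γ), where M_γ := (e^{γ} − 1)I. (This is the covariance of one step of the Wasserstein-then-Fisher–Rao sequential splitting in the multivariate Gaussian case.) -/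
open Matrix Set

attribute [local instance] Matrix.frobeniusNormedAddCommGroup Matrix.frobeniusNormedSpace

attribute [local instance] Matrix.frobeniusNormedRing Matrix.frobeniusNormedAlgebra

lemma wfr_key {R : Type*} [Ring R] [Module ℝ R] [SMulCommClass ℝ R R] [IsScalarTower ℝ R R]
    (K P A B G Cπ : R) (m : ℝ)
    (hG : G = K + (1 / 2 : ℝ) • 1) (hB : B = A - m • K)
    (hCK : Cπ * K = 1) (hKC : K * Cπ = 1) (hPA : P * A = 1) (hAP : A * P = 1) :
    -((Cπ + P) * K * (1 - (2 : ℝ) • (m • (1 : R) * K)) * (Cπ + P))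
      - (1 - (1 / 2 : ℝ) • Cπ + (2 : ℝ) • (m • (1 : R))) * K * (Cπ + P)
      - (Cπ + P) * K * (1 - (1 / 2 : ℝ) • Cπ + (2 : ℝ) • (m • (1 : R)))
      + (2 : ℝ) • ((1 : R) + m • (1 : R))
    = -(P * (G * B + B * G + (m + 1) • K) * P) := by
  subst hG hB
  have hPA' : ∀ x : R, P * (A * x) = x := fun x => by rw [← mul_assoc, hPA, one_mul]
  have hKC' : ∀ x : R, K * (Cπ * x) = x := fun x => by rw [← mul_assoc, hKC, one_mul]
  have hCK' : ∀ x : R, Cπ * (K * x) = x := fun x => by rw [← mul_assoc, hCK, one_mul]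
  simp only [mul_add, add_mul, mul_sub, sub_mul, smul_mul_assoc, mul_smul_comm, smul_add,
    smul_sub, smul_smul, mul_assoc, one_mul, mul_one, hPA', hAP, hKC', hCK', hKC, hCK]
  module

set_option maxHeartbeats 1000000 in
/-- Covariance of one step of the Wasserstein-then-Fisher–Rao sequential
splitting in the multivariate Gaussian case solves the perturbed covariance ODE with
perturbation `M_γ = (e^γ − 1) I`. -/
theorem wfr_split_WFR_covariance
    (d : ℕ) (hd : 1 ≤ d)
    (Cπ : Matrix (Fin d) (Fin d) ℝ) (hCπ : Cπ.PosDef)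
    (Γ : Matrix (Fin d) (Fin d) ℝ) (hΓ : Γ = Cπ⁻¹ + (1 / 2 : ℝ) • 1)
    (C₀ : Matrix (Fin d) (Fin d) ℝ) (hC₀ : C₀.PosDef) (hC₀π : IsUnit (C₀ - Cπ))
    (T : ℝ) (hT : 0 < T)
    (hinv : ∀ γ ∈ Icc (0 : ℝ) T,
      IsUnit (NormedSpace.exp (γ • Γ) * (C₀ - Cπ)⁻¹ * NormedSpace.exp (γ • Γ)
        + (Real.exp γ - 1) • Cπ⁻¹))
    (M : ℝ → Matrix (Fin d) (Fin d) ℝ) (hM : ∀ γ, M γ = (Real.exp γ - 1) • 1)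
    (Q : ℝ → Matrix (Fin d) (Fin d) ℝ)
    (hQ : ∀ γ, Q γ = Cπ +
      (NormedSpace.exp (γ • Γ) * (C₀ - Cπ)⁻¹ * NormedSpace.exp (γ • Γ)
        + (Real.exp γ - 1) • Cπ⁻¹)⁻¹) :
    Q 0 = C₀ ∧
      ∀ γ ∈ Icc (0 : ℝ) T,
        HasDerivAt Q
          (-(Q γ * Cπ⁻¹ * (1 - (2 : ℝ) • (M γ * Cπ⁻¹)) * Q γ)
            - (1 - (1 / 2 : ℝ) • Cπ + (2 : ℝ) • M γ) * Cπ⁻¹ * Q γ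
            - Q γ * Cπ⁻¹ * (1 - (1 / 2 : ℝ) • Cπ + (2 : ℝ) • M γ)
            + (2 : ℝ) • (1 + M γ)) γ := by
  have hdetCπ : IsUnit Cπ.det := (isUnit_iff_ne_zero).mpr hCπ.det_pos.ne'
  have hCK : Cπ * Cπ⁻¹ = 1 := Matrix.mul_nonsing_inv _ hdetCπ
  have hKC : Cπ⁻¹ * Cπ = 1 := Matrix.nonsing_inv_mul _ hdetCπ
  set S := (C₀ - Cπ)⁻¹ with hS
  set A : ℝ → Matrix (Fin d) (Fin d) ℝ := fun t =>
    NormedSpace.exp (t • Γ) * S * NormedSpace.exp (t • Γ) + (Real.exp t - 1) • Cπ⁻¹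
    with hAdef
  constructor
  · rw [hQ 0]
    have h0 : A 0 = S := by
      simp [hAdef, NormedSpace.exp_zero, Real.exp_zero]
    rw [show ((NormedSpace.exp ((0:ℝ) • Γ) * S * NormedSpace.exp ((0:ℝ) • Γ)
        + (Real.exp 0 - 1) • Cπ⁻¹) : Matrix (Fin d) (Fin d) ℝ) = A 0 from rfl, h0, hS,
      Matrix.nonsing_inv_nonsing_inv _ ((Matrix.isUnit_iff_isUnit_det _).mp hC₀π)]
    abel
  · intro γ hγ
    set m : ℝ := Real.exp γ - 1 with hm'
    set E : Matrix (Fin d) (Fin d) ℝ := NormedSpace.exp (γ • Γ) with hE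
    have hA' : HasDerivAt A (Γ * (E * S * E) + (E * S * E) * Γ + Real.exp γ • Cπ⁻¹) γ := by
      have h1 := hasDerivAt_exp_smul_const' (𝕂 := ℝ) Γ γ
      have h2 := hasDerivAt_exp_smul_const (𝕂 := ℝ) Γ γ
      have h3 : HasDerivAt (fun t : ℝ => (Real.exp t - 1) • Cπ⁻¹) (Real.exp γ • Cπ⁻¹) γ :=
        ((Real.hasDerivAt_exp γ).sub_const 1).smul_const _
      have h4 := ((h1.mul_const S).mul h2).add h3
      convert h4 using 1
      case e'_4 => rfl
      case e'_5 => rfl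
      case e'_6 => rfl
      case e'_8 => rfl
      simp only [mul_assoc]
      rfl
    have hu : IsUnit (A γ) := hinv γ hγ
    obtain ⟨u, hu'⟩ := hu
    have hPA : (A γ)⁻¹ * A γ = 1 :=
      Matrix.nonsing_inv_mul _ ((Matrix.isUnit_iff_isUnit_det _).mp (hinv γ hγ))
    have hAP : A γ * (A γ)⁻¹ = 1 :=
      Matrix.mul_nonsing_inv _ ((Matrix.isUnit_iff_isUnit_det _).mp (hinv γ hγ))
    have hf := hasFDerivAt_ringInverse (𝕜 := ℝ) u
    rw [hu'] at hf
    have hi := hf.comp_hasDerivAt γ hA'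
    have hi2 : HasDerivAt (fun t => (A t)⁻¹)
        (-((A γ)⁻¹ * (Γ * (E * S * E) + (E * S * E) * Γ + Real.exp γ • Cπ⁻¹) * (A γ)⁻¹)) γ := by
      have hfun : (Ring.inverse ∘ A) = fun t => (A t)⁻¹ := by
        funext t; simp [Function.comp, Matrix.nonsing_inv_eq_ringInverse]
      rw [hfun] at hi
      convert hi using 1
      case e'_4 => rfl
      case e'_5 => rfl
      case e'_6 => rfl
      rw [← hu', Matrix.coe_units_inv, hu']
      simp [ContinuousLinearMap.neg_apply, ContinuousLinearMap.mulLeftRight_apply, mul_assoc]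
    have hQd : HasDerivAt Q
        (-((A γ)⁻¹ * (Γ * (E * S * E) + (E * S * E) * Γ + Real.exp γ • Cπ⁻¹) * (A γ)⁻¹)) γ := by
      have := hi2.const_add Cπ
      convert this using 1
      case e'_4 => rfl
      case e'_5 => rfl
      case e'_6 => rfl
      funext t
      rw [hQ t]
    convert hQd using 1
    have he : Real.exp γ = m + 1 := by rw [hm']; ring
    have hB : E * S * E = A γ - m • Cπ⁻¹ := by
      rw [hAdef]; simp [hE, hm']
    have hfold : NormedSpace.exp (γ • Γ) * S * NormedSpace.exp (γ • Γ) + m • Cπ⁻¹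
        = A γ := rfl
    rw [hQ γ, hM γ, ← hm', hfold, he, hB]
    exact wfr_key Cπ⁻¹ (A γ)⁻¹ (A γ) (A γ - m • Cπ⁻¹) Γ Cπ m hΓ rfl hCK hKC hPA hAP
end

section
/- Let d ≥ 1, let C_π be a symmetric positive definite d×d real matrix, set Γ := C_π^{-1} + (1/2)I, let C_0 be symmetric positive definite with C_0 − C_π invertible, and let T > 0. Assume that for every γ ∈ [0,T] the matrix e^{Γγ}(C_0 − C_π)^{-1}e^{Γγ} + (e^{γ} − 1)C_π^{-1}e^{2γC_π^{-1}} is invertible. Then P_γ := C_π + ( e^{Γγ}(C_0 − C_π)^{-1}e^{Γγ} + (e^{γ} − 1)C_π^{-1}e^{2γC_π^{-1}} )^{-1} satisfies P_0 = C_0 and, for every γ ∈ [0,T], P is differentiable at γ with dP_γ/dγ = −P_γ C_π^{-1}(I − 2M_γ C_π^{-1})P_γ − (I − (1/2)C_π + 2M_γ)C_π^{-1}P_γ − P_γ C_π^{-1}(I − (1/2)C_π + 2M_γ) + 2(I + M_γ), where M_γ := −(1/2)C_π(e^{2γC_π^{-1}} − I). (This is the covariance of one step of the Fisher–Rao-then-Wasserstein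 sequential splitting in the multivariate Gaussian case.) -/
open Matrix Set

attribute [local instance] Matrix.frobeniusNormedAddCommGroup Matrix.frobeniusNormedSpace
attribute [local instance] Matrix.frobeniusNormedRing Matrix.frobeniusNormedAlgebra

/-- Auxiliary purely algebraic identity: the claimed ODE right-hand side, after
substituting the explicit formulas for `M` and `P = Cπ + R`, collapses to
`-(Γ R) - R Γ - R (S E) R`. -/
private theorem wfr_aux1 {A : Type*} [Ring A] [Algebra ℝ A]
    (Cp S E Γm Rm M P : A)
    (hCS : Cp * S = 1) (hSC : S * Cp = 1)
    (hES : E * S = S * E) (hEC : E * Cp = Cp * E)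
    (hΓ : Γm = S + (1 / 2 : ℝ) • (1 : A))
    (hM : M = -((1 / 2 : ℝ) • (Cp * (E - 1))))
    (hP : P = Cp + Rm) :
    -(P * S * (1 - (2 : ℝ) • (M * S)) * P)
      - (1 - (1 / 2 : ℝ) • Cp + (2 : ℝ) • M) * S * P
      - P * S * (1 - (1 / 2 : ℝ) • Cp + (2 : ℝ) • M)
      + (2 : ℝ) • (1 + M)
    = -(Γm * Rm) - Rm * Γm - Rm * (S * E) * Rm := by
  subst hΓ hM hP
  have e1 : ∀ x : A, Cp * (S * x) = x := fun x => by rw [← mul_assoc, hCS, one_mul]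
  have e2 : ∀ x : A, S * (Cp * x) = x := fun x => by rw [← mul_assoc, hSC, one_mul]
  have e3 : ∀ x : A, E * (S * x) = S * (E * x) := fun x => by
    rw [← mul_assoc, hES, mul_assoc]
  have e4 : ∀ x : A, E * (Cp * x) = Cp * (E * x) := fun x => by
    rw [← mul_assoc, hEC, mul_assoc]
  simp only [mul_add, add_mul, mul_sub, sub_mul, mul_neg, neg_mul, smul_mul_assoc,
    mul_smul_comm, mul_assoc, mul_one, one_mul, smul_add, smul_sub, smul_neg, smul_smul,
    e1, e2, e3, e4, hCS, hSC, hES, hEC]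
  module

/-- Auxiliary purely algebraic identity: the raw derivative of
`γ ↦ G A G + (e^γ - 1) (S E)` equals `Γ Q + Q Γ + S E`. -/
private theorem wfr_aux2 {R : Type*} [Ring R] [Algebra ℝ R]
    (G A S E Γm : R) (c : ℝ)
    (hES : E * S = S * E) (hSG : S * G = G * S)
    (hΓ : Γm = S + (1 / 2 : ℝ) • (1 : R)) :
    Γm * G * A * G + G * A * (Γm * G)
      + ((c - 1) • (S * (E * ((2 : ℝ) • S))) + c • (S * E))
    = Γm * (G * A * G + (c - 1) • (S * E))
      + (G * A * G + (c - 1) • (S * E)) * Γm + S * E := by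
  subst hΓ
  have h1 : ∀ x : R, S * (G * x) = G * (S * x) := fun x => by
    rw [← mul_assoc, hSG, mul_assoc]
  have h3 : ∀ x : R, E * (S * x) = S * (E * x) := fun x => by
    rw [← mul_assoc, hES, mul_assoc]
  simp only [mul_add, add_mul, smul_mul_assoc, mul_smul_comm, mul_assoc, one_mul, mul_one,
    smul_add, smul_smul, h1, h3, hSG, hES]
  module

/-- Covariance of one step of the Fisher–Rao-then-Wasserstein sequential
splitting in the multivariate Gaussian case solves the perturbed covariance ODE with
perturbation `M_γ = −(1/2) C_π (e^{2γC_π^{-1}} − I)`. -/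
theorem wfr_split_FRW_covariance
    (d : ℕ) (hd : 1 ≤ d)
    (Cπ : Matrix (Fin d) (Fin d) ℝ) (hCπ : Cπ.PosDef)
    (Γ : Matrix (Fin d) (Fin d) ℝ) (hΓ : Γ = Cπ⁻¹ + (1 / 2 : ℝ) • 1)
    (C₀ : Matrix (Fin d) (Fin d) ℝ) (hC₀ : C₀.PosDef) (hC₀π : IsUnit (C₀ - Cπ))
    (T : ℝ) (hT : 0 < T)
    (hinv : ∀ γ ∈ Icc (0 : ℝ) T,
      IsUnit (NormedSpace.exp (γ • Γ) * (C₀ - Cπ)⁻¹ * NormedSpace.exp (γ • Γ)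
        + (Real.exp γ - 1) • (Cπ⁻¹ * NormedSpace.exp ((2 * γ) • Cπ⁻¹))))
    (M : ℝ → Matrix (Fin d) (Fin d) ℝ)
    (hM : ∀ γ, M γ = -((1 / 2 : ℝ) • (Cπ * (NormedSpace.exp ((2 * γ) • Cπ⁻¹) - 1))))
    (P : ℝ → Matrix (Fin d) (Fin d) ℝ)
    (hP : ∀ γ, P γ = Cπ +
      (NormedSpace.exp (γ • Γ) * (C₀ - Cπ)⁻¹ * NormedSpace.exp (γ • Γ)
        + (Real.exp γ - 1) • (Cπ⁻¹ * NormedSpace.exp ((2 * γ) • Cπ⁻¹)))⁻¹) :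
    P 0 = C₀ ∧
      ∀ γ ∈ Icc (0 : ℝ) T,
        HasDerivAt P
          (-(P γ * Cπ⁻¹ * (1 - (2 : ℝ) • (M γ * Cπ⁻¹)) * P γ)
            - (1 - (1 / 2 : ℝ) • Cπ + (2 : ℝ) • M γ) * Cπ⁻¹ * P γ
            - P γ * Cπ⁻¹ * (1 - (1 / 2 : ℝ) • Cπ + (2 : ℝ) • M γ)
            + (2 : ℝ) • (1 + M γ)) γ := by
  have hdetCπ : IsUnit Cπ.det := (Matrix.isUnit_iff_isUnit_det _).1 hCπ.isUnit
  have hCS : Cπ * Cπ⁻¹ = 1 := Matrix.mul_nonsing_inv _ hdetCπ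
  have hSC : Cπ⁻¹ * Cπ = 1 := Matrix.nonsing_inv_mul _ hdetCπ
  constructor
  · rw [hP 0]
    simp only [zero_smul, NormedSpace.exp_zero, mul_one, one_mul, Real.exp_zero, sub_self,
      zero_smul, add_zero]
    rw [Matrix.nonsing_inv_nonsing_inv _ ((Matrix.isUnit_iff_isUnit_det _).1 hC₀π)]
    abel
  · intro γ hγ
    -- abbreviations
    set G : Matrix (Fin d) (Fin d) ℝ := NormedSpace.exp (γ • Γ) with hG
    set E : Matrix (Fin d) (Fin d) ℝ := NormedSpace.exp ((2 * γ) • Cπ⁻¹) with hE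
    set A : Matrix (Fin d) (Fin d) ℝ := (C₀ - Cπ)⁻¹ with hA
    -- commutation facts
    have hcommSΓ : Commute Cπ⁻¹ Γ := by
      rw [hΓ]
      exact (Commute.refl _).add_right ((Commute.one_right _).smul_right _)
    have hSG : Cπ⁻¹ * G = G * Cπ⁻¹ := ((hcommSΓ.smul_right γ).exp_right).eq
    have hcommCπS : Commute Cπ Cπ⁻¹ := hCS.trans hSC.symm
    have hES : E * Cπ⁻¹ = Cπ⁻¹ * E :=
      (((Commute.refl Cπ⁻¹).smul_right ((2 : ℝ) * γ)).exp_right).eq.symm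
    have hEC : E * Cπ = Cπ * E :=
      ((hcommCπS.smul_right ((2 : ℝ) * γ)).exp_right).eq.symm
    -- the matrix inside the inverse, and its unit structure
    have hu : IsUnit (G * A * G + (Real.exp γ - 1) • (Cπ⁻¹ * E)) := hinv γ hγ
    have hudet : IsUnit (G * A * G + (Real.exp γ - 1) • (Cπ⁻¹ * E)).det :=
      (Matrix.isUnit_iff_isUnit_det _).1 hu
    set Q : Matrix (Fin d) (Fin d) ℝ := G * A * G + (Real.exp γ - 1) • (Cπ⁻¹ * E) with hQ
    set Rm : Matrix (Fin d) (Fin d) ℝ := Q⁻¹ with hRm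
    have hRQ : Rm * Q = 1 := Matrix.nonsing_inv_mul _ hudet
    have hQR : Q * Rm = 1 := Matrix.mul_nonsing_inv _ hudet
    -- derivatives of the building blocks
    have hGd : HasDerivAt (fun t : ℝ => NormedSpace.exp (t • Γ)) (Γ * G) γ :=
      hasDerivAt_exp_smul_const' Γ γ
    have hkey : ∀ t : ℝ, t • ((2 : ℝ) • Cπ⁻¹) = (2 * t) • Cπ⁻¹ := fun t => by
      rw [smul_smul, mul_comm]
    have hEd : HasDerivAt (fun t : ℝ => NormedSpace.exp ((2 * t) • Cπ⁻¹))
        (E * ((2 : ℝ) • Cπ⁻¹)) γ := by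
      have h := hasDerivAt_exp_smul_const (𝕂 := ℝ) ((2 : ℝ) • Cπ⁻¹) γ
      simp only [hkey] at h
      exact h
    have hcd : HasDerivAt (fun t : ℝ => Real.exp t - 1) (Real.exp γ) γ :=
      (Real.hasDerivAt_exp γ).sub_const 1
    have hQd : HasDerivAt
        (fun t : ℝ => NormedSpace.exp (t • Γ) * A * NormedSpace.exp (t • Γ)
          + (Real.exp t - 1) • (Cπ⁻¹ * NormedSpace.exp ((2 * t) • Cπ⁻¹)))
        (Γ * Q + Q * Γ + Cπ⁻¹ * E) γ := by
      have h := ((hGd.mul_const A).mul hGd).add (hcd.smul (hEd.const_mul Cπ⁻¹))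
      refine HasDerivAt.congr_deriv h ?_
      rw [hQ]
      exact (wfr_aux2 G A Cπ⁻¹ E Γ (Real.exp γ) hES hSG hΓ)
    -- derivative of the inverse of Q
    have hQinv : HasDerivAt
        (fun t : ℝ => Ring.inverse (NormedSpace.exp (t • Γ) * A * NormedSpace.exp (t • Γ)
          + (Real.exp t - 1) • (Cπ⁻¹ * NormedSpace.exp ((2 * t) • Cπ⁻¹))))
        (-(Rm * (Γ * Q + Q * Γ + Cπ⁻¹ * E) * Rm)) γ := by
      have hinv_unit : (↑hu.unit⁻¹ : Matrix (Fin d) (Fin d) ℝ) = Rm := by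
        rw [hRm, Matrix.nonsing_inv_eq_ringInverse]
        exact (Ring.inverse_unit hu.unit).symm.trans
          (congrArg Ring.inverse hu.unit_spec)
      have hF := hasFDerivAt_ringInverse (𝕜 := ℝ) hu.unit
      rw [hu.unit_spec] at hF
      have := hF.comp_hasDerivAt γ hQd
      simp only [Function.comp_def, ContinuousLinearMap.neg_apply,
        ContinuousLinearMap.mulLeftRight_apply, hinv_unit, neg_mul, mul_neg] at this
      exact this
    -- derivative of P
    have hPfun : P = fun t : ℝ => Cπ +
        Ring.inverse (NormedSpace.exp (t • Γ) * A * NormedSpace.exp (t • Γ)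
          + (Real.exp t - 1) • (Cπ⁻¹ * NormedSpace.exp ((2 * t) • Cπ⁻¹))) := by
      funext t
      rw [hP t, Matrix.nonsing_inv_eq_ringInverse, hA]
    have hPd : HasDerivAt P (-(Rm * (Γ * Q + Q * Γ + Cπ⁻¹ * E) * Rm)) γ := by
      rw [hPfun]
      exact hQinv.const_add Cπ
    -- identify the two formulas for the derivative
    have hPγ : P γ = Cπ + Rm := by rw [hP γ, hRm, hQ, hA]
    have hsimp : -(Rm * (Γ * Q + Q * Γ + Cπ⁻¹ * E) * Rm)
        = -(Γ * Rm) - Rm * Γ - Rm * (Cπ⁻¹ * E) * Rm := by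
      have h1 : Rm * (Γ * Q + Q * Γ + Cπ⁻¹ * E) * Rm
          = Rm * Γ * (Q * Rm) + (Rm * Q) * (Γ * Rm) + Rm * (Cπ⁻¹ * E) * Rm := by
        noncomm_ring
      rw [h1, hQR, hRQ, mul_one, one_mul]
      noncomm_ring
    have hgoal : -(P γ * Cπ⁻¹ * (1 - (2 : ℝ) • (M γ * Cπ⁻¹)) * P γ)
          - (1 - (1 / 2 : ℝ) • Cπ + (2 : ℝ) • M γ) * Cπ⁻¹ * P γ
          - P γ * Cπ⁻¹ * (1 - (1 / 2 : ℝ) • Cπ + (2 : ℝ) • M γ)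
          + (2 : ℝ) • (1 + M γ)
        = -(Rm * (Γ * Q + Q * Γ + Cπ⁻¹ * E) * Rm) := by
      rw [hsimp]
      exact wfr_aux1 Cπ Cπ⁻¹ E Γ Rm (M γ) (P γ) hCS hSC hES hEC hΓ (hM γ) hPγ
    rw [hgoal]
    exact hPd
end

section
/- Let d ≥ 1, let C_π be a symmetric positive definite d×d real matrix, set Γ := C_π^{-1} + (1/2)I, let γ > 0, and let E_0 be symmetric positive definite. Define the sequence (E_n) by the recursion E_{n+1} = ( e^{Γγ}[ E_n^{-1} + (2I + C_π)^{-1} ] e^{Γγ} − (2I + C_π)^{-1} )^{-1}. Then for every n ≥ 0 this recursion is well defined (all matrices being inverted are invertible) and E_n = e^{−nγΓ} ( E_0^{-1} + (1/2)Γ^{-1} C_π^{-1}( I − e^{−2nγΓ} ) )^{-1} e^{−nγΓ}. (This is the closed form of the covariance error E_n = C_{nγ} − C_π of the exact Wasserstein–Fisher–Rao flow between Gaussians, with Ω := (1/2)Γ^{-1}.) -/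
open Matrix

namespace WFRAux

variable {d : ℕ} {U : Matrix (Fin d) (Fin d) ℝ}

noncomputable def Φ (U : Matrix (Fin d) (Fin d) ℝ) (f : Fin d → ℝ) :
    Matrix (Fin d) (Fin d) ℝ :=
  U * Matrix.diagonal f * star U

lemma diag_eq (f : Fin d → ℝ) :
    Matrix.diagonal f = Matrix.diagonalRingHom (Fin d) ℝ f := rfl

lemma phi_add (f g : Fin d → ℝ) : Φ U f + Φ U g = Φ U (f + g) := by
  simp only [Φ, diag_eq, map_add, Matrix.mul_add, Matrix.add_mul]

lemma phi_sub (f g : Fin d → ℝ) : Φ U f - Φ U g = Φ U (f - g) := by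
  simp only [Φ, diag_eq, map_sub, Matrix.mul_sub, Matrix.sub_mul]

lemma phi_smul (c : ℝ) (f : Fin d → ℝ) : c • Φ U f = Φ U (c • f) := by
  simp only [Φ, Matrix.diagonal_smul, Matrix.smul_mul, Matrix.mul_smul]

lemma phi_one (hU : U * star U = 1) : Φ U 1 = 1 := by
  simp only [Φ, diag_eq, _root_.map_one, Matrix.mul_one]
  exact hU

lemma phi_mul (hU' : star U * U = 1) (f g : Fin d → ℝ) :
    Φ U f * Φ U g = Φ U (f * g) := by
  simp only [Φ]
  rw [Matrix.mul_assoc, Matrix.mul_assoc, ← Matrix.mul_assoc (star U),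
    ← Matrix.mul_assoc (star U), hU', Matrix.one_mul, ← Matrix.mul_assoc,
    ← Matrix.mul_assoc, diag_eq, diag_eq, diag_eq, Matrix.mul_assoc U,
    ← _root_.map_mul]

lemma phi_inv (hU : U * star U = 1) (hU' : star U * U = 1) {f : Fin d → ℝ}
    (hf : ∀ i, f i ≠ 0) : (Φ U f)⁻¹ = Φ U f⁻¹ := by
  refine Matrix.inv_eq_right_inv ?_
  rw [phi_mul hU']
  have : f * f⁻¹ = 1 := by
    funext i
    exact mul_inv_cancel₀ (hf i)
  rw [this, phi_one hU]

lemma phi_psd {f : Fin d → ℝ} (hf : ∀ i, 0 ≤ f i) : (Φ U f).PosSemidef := by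
  have := (Matrix.posSemidef_diagonal_iff.mpr hf).mul_mul_conjTranspose_same U
  simpa [Φ, Matrix.star_eq_conjTranspose, Matrix.mul_assoc] using this

lemma phi_exp (hU : U * star U = 1) (f : Fin d → ℝ) :
    NormedSpace.exp (Φ U f) = Φ U fun i => Real.exp (f i) := by
  have h1 : U⁻¹ = star U := Matrix.inv_eq_right_inv hU
  have h2 : IsUnit U :=
    @isUnit_of_invertible _ _ _ (invertibleOfRightInverse U (star U) hU)
  rw [Φ, ← h1, Matrix.exp_conj U _ h2, Matrix.exp_diagonal, Pi.exp_def]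
  congr 2
  funext i
  rw [Real.exp_eq_exp_ℝ]

lemma conj_step (hU' : star U * U = 1) (A : Matrix (Fin d) (Fin d) ℝ)
    (t u b w w' v : Fin d → ℝ) (h1 : u * t = v)
    (h2 : u * (t * w * t + b) * u - b = v * w' * v) :
    Φ U u * (Φ U t * (A + Φ U w) * Φ U t + Φ U b) * Φ U u - Φ U b
      = Φ U v * (A + Φ U w') * Φ U v := by
  have pm : ∀ f g : Fin d → ℝ, Φ U f * Φ U g = Φ U (f * g) := phi_mul hU'
  have expand : ∀ (B : Matrix (Fin d) (Fin d) ℝ) (x y : Fin d → ℝ),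
      Φ U x * (B + Φ U y) * Φ U x = Φ U x * B * Φ U x + Φ U (x * y * x) := by
    intro B x y
    rw [mul_add, add_mul, pm, pm]
  have comm : Φ U t * Φ U u = Φ U u * Φ U t := by
    rw [pm, pm, mul_comm]
  have hconj : Φ U u * (Φ U t * A * Φ U t) * Φ U u = Φ U v * A * Φ U v := by
    rw [← h1, ← pm u t]
    simp only [mul_assoc]
    rw [comm]
  rw [expand A t w, add_assoc, phi_add,
    expand (Φ U t * A * Φ U t) u (t * w * t + b), hconj, add_sub_assoc, phi_sub,
    expand A v w', h2]

lemma scalar_key (B a c : ℝ) :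
    Real.exp a * Real.exp c * (B * (1 - Real.exp (-(c + c)))) * Real.exp c * Real.exp a
      + (Real.exp a * B * Real.exp a - B)
      = Real.exp (c + a) * (B * (1 - Real.exp (-((c + a) + (c + a))))) * Real.exp (c + a) := by
  simp only [Real.exp_neg, Real.exp_add]
  have h1 := Real.exp_ne_zero a
  have h2 := Real.exp_ne_zero c
  field_simp
  ring

end WFRAux

/-- Closed form of the covariance error `E_n = C_{nγ} − C_π` of the exact
Wasserstein–Fisher–Rao flow between Gaussians, with `Ω = (1/2)Γ⁻¹`. -/
theorem wfr_exact_covariance_error_closed_form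
    (d : ℕ) (hd : 1 ≤ d)
    (Cπ : Matrix (Fin d) (Fin d) ℝ) (hCπ : Cπ.PosDef)
    (Γ : Matrix (Fin d) (Fin d) ℝ) (hΓ : Γ = Cπ⁻¹ + (1 / 2 : ℝ) • 1)
    (γ : ℝ) (hγ : 0 < γ)
    (E₀ : Matrix (Fin d) (Fin d) ℝ) (hE₀ : E₀.PosDef)
    (E : ℕ → Matrix (Fin d) (Fin d) ℝ)
    (hE0 : E 0 = E₀)
    (hErec : ∀ n, E (n + 1) =
      (NormedSpace.exp (γ • Γ) * ((E n)⁻¹ + ((2 : ℝ) • 1 + Cπ)⁻¹) *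
        NormedSpace.exp (γ • Γ) - ((2 : ℝ) • 1 + Cπ)⁻¹)⁻¹) :
    ∀ n : ℕ,
      IsUnit (E n) ∧
      IsUnit (NormedSpace.exp (γ • Γ) * ((E n)⁻¹ + ((2 : ℝ) • 1 + Cπ)⁻¹) *
        NormedSpace.exp (γ • Γ) - ((2 : ℝ) • 1 + Cπ)⁻¹) ∧
      IsUnit (E₀⁻¹ + (1 / 2 : ℝ) •
        (Γ⁻¹ * Cπ⁻¹ * (1 - NormedSpace.exp ((-(2 * (n : ℝ) * γ)) • Γ)))) ∧
      E n = NormedSpace.exp ((-((n : ℝ) * γ)) • Γ) *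
        (E₀⁻¹ + (1 / 2 : ℝ) •
          (Γ⁻¹ * Cπ⁻¹ * (1 - NormedSpace.exp ((-(2 * (n : ℝ) * γ)) • Γ))))⁻¹ *
        NormedSpace.exp ((-((n : ℝ) * γ)) • Γ) := by

  classical
  have hH : Cπ.IsHermitian := hCπ.1
  set V : Matrix (Fin d) (Fin d) ℝ :=
    (Matrix.IsHermitian.eigenvectorUnitary hH : Matrix (Fin d) (Fin d) ℝ) with hVdef
  have hU : V * star V = 1 :=
    Matrix.mem_unitaryGroup_iff.mp (Matrix.IsHermitian.eigenvectorUnitary hH).2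
  have hU' : star V * V = 1 :=
    Matrix.mem_unitaryGroup_iff'.mp (Matrix.IsHermitian.eigenvectorUnitary hH).2
  set lam : Fin d → ℝ := hH.eigenvalues with hlam
  have hlampos : ∀ i, 0 < lam i := fun i => hCπ.eigenvalues_pos i
  set g : Fin d → ℝ := fun i => (lam i)⁻¹ + 1 / 2 with hgdef
  have hgpos : ∀ i, 0 < g i := fun i => by
    have := hlampos i
    have : (0:ℝ) < (lam i)⁻¹ := inv_pos.mpr this
    simp only [hgdef]
    linarith
  have hCπeq : Cπ = WFRAux.Φ V lam := by
    have h := hH.spectral_theorem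
    simpa [WFRAux.Φ, RCLike.ofReal_real_eq_id] using h
  have hCinv : Cπ⁻¹ = WFRAux.Φ V lam⁻¹ := by
    rw [hCπeq, WFRAux.phi_inv hU hU' (fun i => (hlampos i).ne')]
  have hΓeq : Γ = WFRAux.Φ V g := by
    rw [hΓ, hCinv, ← WFRAux.phi_one hU, WFRAux.phi_smul, WFRAux.phi_add]
    have hfg : lam⁻¹ + (1 / 2 : ℝ) • (1 : Fin d → ℝ) = g := by
      funext i
      simp [hgdef]
    rw [hfg]
  have hΓinv : Γ⁻¹ = WFRAux.Φ V g⁻¹ := by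
    rw [hΓeq, WFRAux.phi_inv hU hU' (fun i => (hgpos i).ne')]
  have hexpΓ : ∀ a : ℝ, NormedSpace.exp (a • Γ)
      = WFRAux.Φ V fun i => Real.exp (a * g i) := by
    intro a
    rw [hΓeq, WFRAux.phi_smul, WFRAux.phi_exp hU]
    have hfg : (fun i => Real.exp ((a • g) i)) = fun i => Real.exp (a * g i) := by
      funext i
      simp
    rw [hfg]
  have h2pos : ∀ i, (0:ℝ) < 2 + lam i := fun i => by linarith [hlampos i]
  have hB : ((2:ℝ) • 1 + Cπ)⁻¹ = WFRAux.Φ V fun i => (2 + lam i)⁻¹ := by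
    have h2C : ((2:ℝ) • (1 : Matrix (Fin d) (Fin d) ℝ) + Cπ)
        = WFRAux.Φ V (fun i => 2 + lam i) := by
      rw [hCπeq, ← WFRAux.phi_one hU, WFRAux.phi_smul, WFRAux.phi_add]
      have hfg : (2 : ℝ) • (1 : Fin d → ℝ) + lam = fun i => 2 + lam i := by
        funext i
        simp
      rw [hfg]
    rw [h2C, WFRAux.phi_inv hU hU' (fun i => (h2pos i).ne')]
    have hfg : (fun i => 2 + lam i)⁻¹ = fun i => (2 + lam i)⁻¹ := by
      funext i
      simp
    rw [hfg]
  have hW : ∀ s : ℝ, (1 / 2 : ℝ) • (Γ⁻¹ * Cπ⁻¹ * (1 - NormedSpace.exp ((-s) • Γ)))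
      = WFRAux.Φ V fun i => (2 + lam i)⁻¹ * (1 - Real.exp ((-s) * g i)) := by
    intro s
    rw [hΓinv, hCinv, hexpΓ, ← WFRAux.phi_one hU, WFRAux.phi_sub,
      WFRAux.phi_mul hU', WFRAux.phi_mul hU', WFRAux.phi_smul]
    have hfg : (1 / 2 : ℝ) • (g⁻¹ * lam⁻¹ * ((1 : Fin d → ℝ) - fun i => Real.exp ((-s) * g i)))
        = fun i => (2 + lam i)⁻¹ * (1 - Real.exp ((-s) * g i)) := by
      funext i
      have h1 := (hlampos i).ne'
      have h2' : (lam i)⁻¹ + (1 / 2 : ℝ) ≠ 0 := by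
        have := hgpos i
        rw [hgdef] at this
        exact this.ne'
      have h3 := (h2pos i).ne'
      have hkey : (1 / 2 : ℝ) * ((g i)⁻¹ * (lam i)⁻¹) = (2 + lam i)⁻¹ := by
        rw [hgdef]
        field_simp
      simp only [Pi.smul_apply, Pi.mul_apply, Pi.sub_apply, Pi.inv_apply, Pi.one_apply,
        smul_eq_mul]
      calc (1 / 2 : ℝ) * ((g i)⁻¹ * (lam i)⁻¹ * (1 - Real.exp ((-s) * g i)))
          = ((1 / 2 : ℝ) * ((g i)⁻¹ * (lam i)⁻¹)) * (1 - Real.exp ((-s) * g i)) := by ring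
        _ = (2 + lam i)⁻¹ * (1 - Real.exp ((-s) * g i)) := by rw [hkey]
    rw [hfg]
  have hFpos : ∀ s : ℝ, 0 ≤ s →
      (E₀⁻¹ + (1 / 2 : ℝ) • (Γ⁻¹ * Cπ⁻¹ * (1 - NormedSpace.exp ((-s) • Γ)))).PosDef := by
    intro s hs
    rw [hW s]
    refine hE₀.inv.add_posSemidef (WFRAux.phi_psd fun i => ?_)
    have h1 : (0:ℝ) ≤ (2 + lam i)⁻¹ := le_of_lt (inv_pos.mpr (h2pos i))
    have h2 : Real.exp ((-s) * g i) ≤ 1 := by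
      rw [Real.exp_le_one_iff]
      have := (hgpos i).le
      nlinarith
    have := sub_nonneg.mpr h2
    positivity
  have hdet : ∀ {A : Matrix (Fin d) (Fin d) ℝ}, A.PosDef → IsUnit A.det :=
    fun h => isUnit_iff_ne_zero.mpr h.det_pos.ne'
  have hunit : ∀ {A : Matrix (Fin d) (Fin d) ℝ}, A.PosDef → IsUnit A :=
    fun h => (Matrix.isUnit_iff_isUnit_det _).mpr (hdet h)
  have hXmul : ∀ a c : ℝ, NormedSpace.exp (a • Γ) * NormedSpace.exp (c • Γ)
      = NormedSpace.exp ((a + c) • Γ) := by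
    intro a c
    rw [add_smul]
    exact (Matrix.exp_add_of_commute _ _ (((Commute.refl Γ).smul_left a).smul_right c)).symm
  have hXinv : ∀ a : ℝ, (NormedSpace.exp (a • Γ))⁻¹ = NormedSpace.exp ((-a) • Γ) := by
    intro a
    refine Matrix.inv_eq_right_inv ?_
    rw [hXmul]
    simp [NormedSpace.exp_zero]
  have hXinv' : ∀ a : ℝ, (NormedSpace.exp ((-a) • Γ))⁻¹ = NormedSpace.exp (a • Γ) := by
    intro a
    rw [hXinv, neg_neg]
  have step : ∀ n : ℕ,
      E n = NormedSpace.exp ((-((n : ℝ) * γ)) • Γ) *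
        (E₀⁻¹ + (1 / 2 : ℝ) •
          (Γ⁻¹ * Cπ⁻¹ * (1 - NormedSpace.exp ((-(2 * (n : ℝ) * γ)) • Γ))))⁻¹ *
        NormedSpace.exp ((-((n : ℝ) * γ)) • Γ) →
      NormedSpace.exp (γ • Γ) * ((E n)⁻¹ + ((2 : ℝ) • 1 + Cπ)⁻¹) *
        NormedSpace.exp (γ • Γ) - ((2 : ℝ) • 1 + Cπ)⁻¹
      = NormedSpace.exp ((((n : ℝ) + 1) * γ) • Γ) *
        (E₀⁻¹ + (1 / 2 : ℝ) •
          (Γ⁻¹ * Cπ⁻¹ * (1 - NormedSpace.exp ((-(2 * ((n : ℝ) + 1) * γ)) • Γ)))) *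
        NormedSpace.exp ((((n : ℝ) + 1) * γ) • Γ) := by
    intro n hn
    have hdetF := hdet (hFpos (2 * (n : ℝ) * γ) (by positivity))
    have hEinv : (E n)⁻¹ = NormedSpace.exp (((n : ℝ) * γ) • Γ) *
        (E₀⁻¹ + (1 / 2 : ℝ) •
          (Γ⁻¹ * Cπ⁻¹ * (1 - NormedSpace.exp ((-(2 * (n : ℝ) * γ)) • Γ)))) *
        NormedSpace.exp (((n : ℝ) * γ) • Γ) := by
      rw [hn, Matrix.mul_inv_rev, Matrix.mul_inv_rev,
        Matrix.nonsing_inv_nonsing_inv _ hdetF, hXinv', ← Matrix.mul_assoc]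
    rw [hEinv, hW (2 * (n : ℝ) * γ), hW (2 * ((n : ℝ) + 1) * γ), hB,
      hexpΓ γ, hexpΓ ((n : ℝ) * γ), hexpΓ (((n : ℝ) + 1) * γ)]
    refine WFRAux.conj_step hU' E₀⁻¹ _ _ _ _ _ _ ?_ ?_
    · funext i
      simp only [Pi.mul_apply]
      rw [← Real.exp_add]
      congr 1
      ring
    · funext i
      simp only [Pi.mul_apply, Pi.sub_apply, Pi.add_apply]
      have key := WFRAux.scalar_key ((2 + lam i)⁻¹) (γ * g i) ((n : ℝ) * γ * g i)
      have e1 : (-(2 * (n : ℝ) * γ)) * g i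
          = -((n : ℝ) * γ * g i + (n : ℝ) * γ * g i) := by ring
      have e2 : (((n : ℝ) + 1) * γ) * g i = (n : ℝ) * γ * g i + γ * g i := by ring
      have e3 : (-(2 * ((n : ℝ) + 1) * γ)) * g i
          = -(((n : ℝ) * γ * g i + γ * g i) + ((n : ℝ) * γ * g i + γ * g i)) := by ring
      rw [e1, e2, e3]
      linear_combination key
  have key : ∀ n : ℕ,
      E n = NormedSpace.exp ((-((n : ℝ) * γ)) • Γ) *
        (E₀⁻¹ + (1 / 2 : ℝ) •
          (Γ⁻¹ * Cπ⁻¹ * (1 - NormedSpace.exp ((-(2 * (n : ℝ) * γ)) • Γ))))⁻¹ *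
        NormedSpace.exp ((-((n : ℝ) * γ)) • Γ) := by
    intro n
    induction n with
    | zero =>
      simp only [Nat.cast_zero, zero_mul, mul_zero, neg_zero, zero_smul,
        NormedSpace.exp_zero, sub_self, Matrix.mul_zero, smul_zero, add_zero,
        Matrix.one_mul, Matrix.mul_one, hE0]
      rw [Matrix.nonsing_inv_nonsing_inv _ (hdet hE₀)]
    | succ n IH =>
      have hM := step n IH
      rw [hErec n, hM, Matrix.mul_inv_rev, Matrix.mul_inv_rev, hXinv, ← Matrix.mul_assoc]
      push_cast
      rfl
  intro n
  refine ⟨?_, ?_, hunit (hFpos (2 * (n : ℝ) * γ) (by positivity)), key n⟩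
  · rw [key n]
    exact ((Matrix.isUnit_exp _).mul
      (hunit (hFpos (2 * (n : ℝ) * γ) (by positivity)).inv)).mul (Matrix.isUnit_exp _)
  · rw [step n (key n)]
    exact ((Matrix.isUnit_exp _).mul
      (hunit (hFpos (2 * ((n : ℝ) + 1) * γ) (by positivity)))).mul (Matrix.isUnit_exp _)
end

section
/- Let d ≥ 1, let C_π be a symmetric positive definite d×d real matrix, set Γ := C_π^{-1} + (1/2)I, let γ > 0, and let E_0 be symmetric positive definite. Define the sequence (E_n^β) by E_0^β := E_0 and the recursion E_{n+1}^β = ( e^{Γγ}(E_n^β)^{-1}e^{Γγ} + (e^{γ} − 1)C_π^{-1} )^{-1}. Then for every n ≥ 0 this recursion is well defined and E_n^β = e^{−nγΓ} ( E_0^{-1} + (1 − e^{γ})( I − e^{2γΓ} )^{-1} C_π^{-1}( I − e^{−2nγΓ} ) )^{-1} e^{−nγΓ}; that is, E_n^β = e^{−nγΓ}( E_0^{-1} + Ω^β C_π^{-1}(I − e^{−2nγΓ}) )^{-1} e^{−nγΓ} with Ω^β := (1 − e^{γ})(I − e^{2γΓ})^{-1}. (This is the closed form of the covariance error of the Wasserstein-then-Fisher–Rao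 splitting scheme between Gaussians after n steps of size γ.) -/
set_option maxHeartbeats 1000000
section helpers

open Matrix

variable {n : Type*} [Fintype n] [DecidableEq n]

lemma myPosDef_smul {c : ℝ} (hc : 0 < c) {A : Matrix n n ℝ} (hA : A.PosDef) :
    (c • A).PosDef := by
  refine Matrix.PosDef.of_dotProduct_mulVec_pos ?_ (fun x hx => ?_)
  · unfold Matrix.IsHermitian
    rw [conjTranspose_smul, hA.1.eq]
    simp
  · rw [smul_mulVec, dotProduct_smul]
    exact mul_pos hc (hA.dotProduct_mulVec_pos hx)

lemma myPosDef_conj {A B : Matrix n n ℝ} (hA : A.PosDef) (hB : IsUnit B) :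
    (B * A * Bᴴ).PosDef := by
  refine Matrix.PosDef.of_dotProduct_mulVec_pos (isHermitian_mul_mul_conjTranspose B hA.1) (fun x hx => ?_)
  have hBH : IsUnit Bᴴ := by
    rw [Matrix.isUnit_iff_isUnit_det, det_conjTranspose]
    exact ((Matrix.isUnit_iff_isUnit_det B).1 hB).star
  have hy : Bᴴ *ᵥ x ≠ 0 :=
    ((Matrix.mulVec_injective_iff_isUnit.mpr hBH).ne_iff' (by simp)).2 hx
  have key : star x ⬝ᵥ (B * A * Bᴴ) *ᵥ x = star (Bᴴ *ᵥ x) ⬝ᵥ A *ᵥ (Bᴴ *ᵥ x) := by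
    rw [mul_assoc, ← mulVec_mulVec, dotProduct_mulVec, star_mulVec,
      conjTranspose_conjTranspose, mulVec_mulVec]
  rw [key]
  exact hA.dotProduct_mulVec_pos hy

lemma myExp_sub_one_posDef {A : Matrix n n ℝ} (hA : A.PosDef) :
    (NormedSpace.exp A - 1).PosDef := by
  have hH := hA.1
  set U : Matrix n n ℝ := (hH.eigenvectorUnitary : Matrix n n ℝ) with hUdef
  have hU1 : U * star U = 1 := Matrix.mem_unitaryGroup_iff.mp hH.eigenvectorUnitary.2
  have hU1' : star U * U = 1 := Matrix.mem_unitaryGroup_iff'.mp hH.eigenvectorUnitary.2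
  have hU : IsUnit U := ⟨⟨U, star U, hU1, hU1'⟩, rfl⟩
  have hUinv : U⁻¹ = star U := Matrix.inv_eq_right_inv hU1
  have hdiag : NormedSpace.exp (diagonal (RCLike.ofReal ∘ hH.eigenvalues) : Matrix n n ℝ)
      = diagonal (fun i => Real.exp (hH.eigenvalues i)) := by
    rw [Matrix.exp_diagonal]
    congr 1
    funext i
    rw [Pi.exp_def]
    simp [Real.exp_eq_exp_ℝ]
  have hexp : NormedSpace.exp A
      = U * diagonal (fun i => Real.exp (hH.eigenvalues i)) * U⁻¹ := by
    conv_lhs => rw [show A = U * diagonal (RCLike.ofReal ∘ hH.eigenvalues) * U⁻¹ from by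
      rw [hUinv]; exact hH.spectral_theorem]
    rw [Matrix.exp_conj _ _ hU, hdiag]
  have h1 : (1 : Matrix n n ℝ) = U * 1 * U⁻¹ := by
    rw [mul_one, Matrix.mul_nonsing_inv _ ((Matrix.isUnit_iff_isUnit_det U).1 hU)]
  have key : NormedSpace.exp A - 1
      = U * diagonal (fun i => Real.exp (hH.eigenvalues i) - 1) * Uᴴ := by
    conv_lhs => rw [hexp, h1]
    rw [← sub_mul, ← mul_sub, hUinv, Matrix.star_eq_conjTranspose]
    congr 2
    rw [← diagonal_one, diagonal_sub]
  rw [key]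
  exact myPosDef_conj (posDef_diagonal_iff.2 fun i =>
    sub_pos.2 (Real.one_lt_exp_iff.2 (hA.eigenvalues_pos i))) hU

end helpers


open Matrix

/-- Closed form of the covariance error of the Wasserstein-then-Fisher–Rao
splitting scheme between Gaussians after `n` steps of size `γ`, with
`Ω^β = (1 − e^γ)(I − e^{2γΓ})⁻¹`. -/
theorem wfr_split_WFR_covariance_error_closed_form
    (d : ℕ) (hd : 1 ≤ d)
    (Cπ : Matrix (Fin d) (Fin d) ℝ) (hCπ : Cπ.PosDef)
    (Γ : Matrix (Fin d) (Fin d) ℝ) (hΓ : Γ = Cπ⁻¹ + (1 / 2 : ℝ) • 1)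
    (γ : ℝ) (hγ : 0 < γ)
    (E₀ : Matrix (Fin d) (Fin d) ℝ) (hE₀ : E₀.PosDef)
    (Ωβ : Matrix (Fin d) (Fin d) ℝ)
    (hΩβ : Ωβ = (1 - Real.exp γ) • (1 - NormedSpace.exp ((2 * γ) • Γ))⁻¹)
    (Eβ : ℕ → Matrix (Fin d) (Fin d) ℝ)
    (hE0 : Eβ 0 = E₀)
    (hErec : ∀ n, Eβ (n + 1) =
      (NormedSpace.exp (γ • Γ) * (Eβ n)⁻¹ * NormedSpace.exp (γ • Γ)
        + (Real.exp γ - 1) • Cπ⁻¹)⁻¹) :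
    ∀ n : ℕ,
      IsUnit (Eβ n) ∧
      IsUnit (NormedSpace.exp (γ • Γ) * (Eβ n)⁻¹ * NormedSpace.exp (γ • Γ)
        + (Real.exp γ - 1) • Cπ⁻¹) ∧
      IsUnit (E₀⁻¹ + (1 - Real.exp γ) •
        ((1 - NormedSpace.exp ((2 * γ) • Γ))⁻¹ * Cπ⁻¹ *
          (1 - NormedSpace.exp ((-(2 * (n : ℝ) * γ)) • Γ)))) ∧
      Eβ n = NormedSpace.exp ((-((n : ℝ) * γ)) • Γ) *
        (E₀⁻¹ + Ωβ * Cπ⁻¹ * (1 - NormedSpace.exp ((-(2 * (n : ℝ) * γ)) • Γ)))⁻¹ *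
        NormedSpace.exp ((-((n : ℝ) * γ)) • Γ) := by

  classical
  have hdet : ∀ {A : Matrix (Fin d) (Fin d) ℝ}, IsUnit A → IsUnit A.det :=
    fun h => (Matrix.isUnit_iff_isUnit_det _).1 h
  have hCinv : Cπ⁻¹.PosDef := hCπ.inv
  have hΓpd : Γ.PosDef := by
    rw [hΓ]
    exact hCinv.add (myPosDef_smul (by norm_num) Matrix.PosDef.one)
  have hΓh : Γ.IsHermitian := hΓpd.1
  have hsmulh : ∀ t : ℝ, ((t • Γ) : Matrix (Fin d) (Fin d) ℝ).IsHermitian := fun t => by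
    show (t • Γ)ᴴ = t • Γ
    rw [conjTranspose_smul, hΓh.eq, star_trivial]
  have hGh : ∀ t : ℝ, (NormedSpace.exp ((t) • Γ))ᴴ = NormedSpace.exp ((t) • Γ) := fun t =>
    (Matrix.IsHermitian.exp (hsmulh t)).eq
  have hGadd : ∀ s t : ℝ, NormedSpace.exp ((s) • Γ) * NormedSpace.exp ((t) • Γ) = NormedSpace.exp ((s + t) • Γ) := fun s t => by
    rw [add_smul]
    exact (Matrix.exp_add_of_commute _ _ (((Commute.refl Γ).smul_left s).smul_right t)).symm
  have hG0 : NormedSpace.exp ((0 : ℝ) • Γ) = 1 := by rw [zero_smul]; exact NormedSpace.exp_zero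
  have hGunit : ∀ t : ℝ, IsUnit (NormedSpace.exp ((t) • Γ)) := fun t => Matrix.isUnit_exp _
  have hGinv : ∀ t : ℝ, (NormedSpace.exp ((t) • Γ))⁻¹ = NormedSpace.exp ((-t) • Γ) := fun t => by
    rw [neg_smul, Matrix.exp_neg]
  have hCΓ : Commute Cπ⁻¹ Γ := by
    rw [hΓ]
    exact (Commute.refl _).add_right ((Commute.one_right _).smul_right _)
  have hCG : ∀ t : ℝ, Commute Cπ⁻¹ (NormedSpace.exp ((t) • Γ)) := fun t => (hCΓ.smul_right t).exp_right
  have hSpd : (NormedSpace.exp ((2 * γ) • Γ) - 1).PosDef :=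
    myExp_sub_one_posDef (myPosDef_smul (by positivity) hΓpd)
  have hSunit : IsUnit (1 - NormedSpace.exp ((2 * γ) • Γ)) := by
    rw [← neg_sub]
    exact hSpd.isUnit.neg
  have hWr : (1 - NormedSpace.exp ((2 * γ) • Γ))⁻¹ * (1 - NormedSpace.exp ((2 * γ) • Γ)) = 1 := Matrix.nonsing_inv_mul _ (hdet hSunit)
  have hWCc : Commute Cπ⁻¹ ((1 - NormedSpace.exp ((2 * γ) • Γ))⁻¹) := by
    have h1 : Commute Cπ⁻¹ (1 - NormedSpace.exp ((2 * γ) • Γ)) := (Commute.one_right _).sub_right (hCG (2 * γ))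
    rw [← hSunit.unit_spec] at h1 ⊢
    rw [← Matrix.coe_units_inv]
    exact h1.units_inv_right
  have hWCe : (1 - NormedSpace.exp ((2 * γ) • Γ))⁻¹ * Cπ⁻¹ = Cπ⁻¹ * (1 - NormedSpace.exp ((2 * γ) • Γ))⁻¹ := hWCc.eq.symm
  have hexp1 : (0:ℝ) < Real.exp γ - 1 := sub_pos.2 (Real.one_lt_exp_iff.2 hγ)
  have hMstep : ∀ k : ℕ,
      (E₀⁻¹ + (1 - Real.exp γ) • ((1 - NormedSpace.exp ((2 * γ) • Γ))⁻¹ * Cπ⁻¹ * (1 - NormedSpace.exp ((-(2 * (((k:ℝ))+1) * γ)) • Γ)))) = (E₀⁻¹ + (1 - Real.exp γ) • ((1 - NormedSpace.exp ((2 * γ) • Γ))⁻¹ * Cπ⁻¹ * (1 - NormedSpace.exp ((-(2 * (k:ℝ) * γ)) • Γ)))) + (Real.exp γ - 1) • (NormedSpace.exp ((-(((k:ℝ)+1) * γ)) • Γ) * Cπ⁻¹ * NormedSpace.exp ((-(((k:ℝ)+1) * γ)) • Γ)) := by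
    intro k
    have e1 : NormedSpace.exp ((-(((k:ℝ)+1) * γ)) • Γ) * Cπ⁻¹ * NormedSpace.exp ((-(((k:ℝ)+1) * γ)) • Γ) = Cπ⁻¹ * NormedSpace.exp ((-(2 * ((k:ℝ)+1) * γ)) • Γ) := by
      rw [← (hCG (-(((k:ℝ)+1) * γ))).eq, _root_.mul_assoc, hGadd]
      have h7 : (-(((k:ℝ)+1) * γ)) + (-(((k:ℝ)+1) * γ)) = -(2 * ((k:ℝ)+1) * γ) := by ring
      rw [h7]
    have hstep2 : (1 - NormedSpace.exp ((2 * γ) • Γ))⁻¹ * (NormedSpace.exp ((-(2 * ((k:ℝ)+1) * γ)) • Γ) - NormedSpace.exp ((-(2 * (k:ℝ) * γ)) • Γ)) = NormedSpace.exp ((-(2 * ((k:ℝ)+1) * γ)) • Γ) := by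
      have h3 : NormedSpace.exp ((-(2 * ((k:ℝ)+1) * γ)) • Γ) - NormedSpace.exp ((-(2 * (k:ℝ) * γ)) • Γ) = (1 - NormedSpace.exp ((2 * γ) • Γ)) * NormedSpace.exp ((-(2 * ((k:ℝ)+1) * γ)) • Γ) := by
        rw [_root_.sub_mul, _root_.one_mul, hGadd]
        have h4 : (2 * γ) + (-(2 * ((k:ℝ)+1) * γ)) = -(2 * (k:ℝ) * γ) := by ring
        rw [h4]
      rw [h3, ← _root_.mul_assoc, hWr, _root_.one_mul]
    have h6 : ((1 - NormedSpace.exp ((2 * γ) • Γ))⁻¹ * Cπ⁻¹ * (1 - NormedSpace.exp ((-(2 * (k:ℝ) * γ)) • Γ))) - ((1 - NormedSpace.exp ((2 * γ) • Γ))⁻¹ * Cπ⁻¹ * (1 - NormedSpace.exp ((-(2 * ((k:ℝ)+1) * γ)) • Γ))) = Cπ⁻¹ * NormedSpace.exp ((-(2 * ((k:ℝ)+1) * γ)) • Γ) := by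
      rw [← _root_.mul_sub, sub_sub_sub_cancel_left, hWCe, _root_.mul_assoc, hstep2]
    have h5 : ((1 - NormedSpace.exp ((2 * γ) • Γ))⁻¹ * Cπ⁻¹ * (1 - NormedSpace.exp ((-(2 * ((k:ℝ)+1) * γ)) • Γ))) = ((1 - NormedSpace.exp ((2 * γ) • Γ))⁻¹ * Cπ⁻¹ * (1 - NormedSpace.exp ((-(2 * (k:ℝ) * γ)) • Γ))) - Cπ⁻¹ * NormedSpace.exp ((-(2 * ((k:ℝ)+1) * γ)) • Γ) := by
      rw [sub_eq_iff_eq_add] at h6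
      rw [h6]
      abel
    rw [h5, e1]
    module
  have main : ∀ k : ℕ, (E₀⁻¹ + (1 - Real.exp γ) • ((1 - NormedSpace.exp ((2 * γ) • Γ))⁻¹ * Cπ⁻¹ * (1 - NormedSpace.exp ((-(2 * (k:ℝ) * γ)) • Γ)))).PosDef ∧
      Eβ k = NormedSpace.exp ((-((k:ℝ) * γ)) • Γ) * (E₀⁻¹ + (1 - Real.exp γ) • ((1 - NormedSpace.exp ((2 * γ) • Γ))⁻¹ * Cπ⁻¹ * (1 - NormedSpace.exp ((-(2 * (k:ℝ) * γ)) • Γ))))⁻¹ * NormedSpace.exp ((-((k:ℝ) * γ)) • Γ) := by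
    intro k
    induction k with
    | zero =>
      norm_num [hG0, hE0]
      exact ⟨hE₀, (Matrix.nonsing_inv_nonsing_inv _ (hdet hE₀.isUnit)).symm⟩
    | succ k ih =>
      obtain ⟨hMk, hEk⟩ := ih
      push_cast
      have hconj : (NormedSpace.exp ((-(((k:ℝ)+1) * γ)) • Γ) * Cπ⁻¹ * NormedSpace.exp ((-(((k:ℝ)+1) * γ)) • Γ)).PosDef := by
        have := myPosDef_conj hCinv (hGunit (-(((k:ℝ)+1) * γ)))
        rwa [hGh] at this
      refine ⟨by rw [hMstep k]; exact hMk.add (myPosDef_smul hexp1 hconj), ?_⟩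
      have hEkinv : (NormedSpace.exp ((-((k:ℝ) * γ)) • Γ) * (E₀⁻¹ + (1 - Real.exp γ) • ((1 - NormedSpace.exp ((2 * γ) • Γ))⁻¹ * Cπ⁻¹ * (1 - NormedSpace.exp ((-(2 * (k:ℝ) * γ)) • Γ))))⁻¹ * NormedSpace.exp ((-((k:ℝ) * γ)) • Γ))⁻¹
          = NormedSpace.exp (((k:ℝ) * γ) • Γ) * (E₀⁻¹ + (1 - Real.exp γ) • ((1 - NormedSpace.exp ((2 * γ) • Γ))⁻¹ * Cπ⁻¹ * (1 - NormedSpace.exp ((-(2 * (k:ℝ) * γ)) • Γ)))) * NormedSpace.exp (((k:ℝ) * γ) • Γ) := by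
        rw [Matrix.mul_inv_rev, Matrix.mul_inv_rev, hGinv, neg_neg,
          Matrix.nonsing_inv_nonsing_inv _ (hdet hMk.isUnit)]
        conv_rhs => rw [_root_.mul_assoc]
      have hmid : NormedSpace.exp ((γ) • Γ) * (NormedSpace.exp (((k:ℝ) * γ) • Γ) * (E₀⁻¹ + (1 - Real.exp γ) • ((1 - NormedSpace.exp ((2 * γ) • Γ))⁻¹ * Cπ⁻¹ * (1 - NormedSpace.exp ((-(2 * (k:ℝ) * γ)) • Γ)))) * NormedSpace.exp (((k:ℝ) * γ) • Γ)) * NormedSpace.exp ((γ) • Γ)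
          = NormedSpace.exp (((((k:ℝ))+1) * γ) • Γ) * (E₀⁻¹ + (1 - Real.exp γ) • ((1 - NormedSpace.exp ((2 * γ) • Γ))⁻¹ * Cπ⁻¹ * (1 - NormedSpace.exp ((-(2 * (k:ℝ) * γ)) • Γ)))) * NormedSpace.exp (((((k:ℝ))+1) * γ) • Γ) := calc
        NormedSpace.exp ((γ) • Γ) * (NormedSpace.exp (((k:ℝ) * γ) • Γ) * (E₀⁻¹ + (1 - Real.exp γ) • ((1 - NormedSpace.exp ((2 * γ) • Γ))⁻¹ * Cπ⁻¹ * (1 - NormedSpace.exp ((-(2 * (k:ℝ) * γ)) • Γ)))) * NormedSpace.exp (((k:ℝ) * γ) • Γ)) * NormedSpace.exp ((γ) • Γ)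
            = (NormedSpace.exp ((γ) • Γ) * NormedSpace.exp (((k:ℝ) * γ) • Γ)) * (E₀⁻¹ + (1 - Real.exp γ) • ((1 - NormedSpace.exp ((2 * γ) • Γ))⁻¹ * Cπ⁻¹ * (1 - NormedSpace.exp ((-(2 * (k:ℝ) * γ)) • Γ)))) * (NormedSpace.exp (((k:ℝ) * γ) • Γ) * NormedSpace.exp ((γ) • Γ)) := by simp only [_root_.mul_assoc]
        _ = NormedSpace.exp (((((k:ℝ))+1) * γ) • Γ) * (E₀⁻¹ + (1 - Real.exp γ) • ((1 - NormedSpace.exp ((2 * γ) • Γ))⁻¹ * Cπ⁻¹ * (1 - NormedSpace.exp ((-(2 * (k:ℝ) * γ)) • Γ)))) * NormedSpace.exp (((((k:ℝ))+1) * γ) • Γ) := by rw [hGadd, hGadd, show γ + (k:ℝ) * γ = (((k:ℝ))+1) * γ by ring, show (k:ℝ) * γ + γ = (((k:ℝ))+1) * γ by ring]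
      have hc : NormedSpace.exp (((((k:ℝ))+1) * γ) • Γ) * (NormedSpace.exp ((-(((k:ℝ)+1) * γ)) • Γ) * Cπ⁻¹ * NormedSpace.exp ((-(((k:ℝ)+1) * γ)) • Γ)) * NormedSpace.exp (((((k:ℝ))+1) * γ) • Γ)
          = Cπ⁻¹ := by
        have hb1 : (((k:ℝ))+1) * γ + (-(((k:ℝ)+1) * γ)) = 0 := by ring
        have hb2 : (-(((k:ℝ)+1) * γ)) + (((k:ℝ))+1) * γ = 0 := by ring
        calc NormedSpace.exp (((((k:ℝ))+1) * γ) • Γ) * (NormedSpace.exp ((-(((k:ℝ)+1) * γ)) • Γ) * Cπ⁻¹ * NormedSpace.exp ((-(((k:ℝ)+1) * γ)) • Γ)) * NormedSpace.exp (((((k:ℝ))+1) * γ) • Γ)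
            = (NormedSpace.exp (((((k:ℝ))+1) * γ) • Γ) * NormedSpace.exp ((-(((k:ℝ)+1) * γ)) • Γ)) * Cπ⁻¹ * (NormedSpace.exp ((-(((k:ℝ)+1) * γ)) • Γ) * NormedSpace.exp (((((k:ℝ))+1) * γ) • Γ)) := by simp only [_root_.mul_assoc]
        _ = Cπ⁻¹ := by rw [hGadd, hGadd, hb1, hb2, hG0, _root_.one_mul, _root_.mul_one]
      have hsum : NormedSpace.exp (((((k:ℝ))+1) * γ) • Γ) * (E₀⁻¹ + (1 - Real.exp γ) • ((1 - NormedSpace.exp ((2 * γ) • Γ))⁻¹ * Cπ⁻¹ * (1 - NormedSpace.exp ((-(2 * (k:ℝ) * γ)) • Γ)))) * NormedSpace.exp (((((k:ℝ))+1) * γ) • Γ)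
            + (Real.exp γ - 1) • Cπ⁻¹
          = NormedSpace.exp (((((k:ℝ))+1) * γ) • Γ) * (E₀⁻¹ + (1 - Real.exp γ) • ((1 - NormedSpace.exp ((2 * γ) • Γ))⁻¹ * Cπ⁻¹ * (1 - NormedSpace.exp ((-(2 * (((k:ℝ))+1) * γ)) • Γ)))) * NormedSpace.exp (((((k:ℝ))+1) * γ) • Γ) := by
        rw [hMstep k]
        conv_rhs => rw [_root_.mul_add, _root_.add_mul]
        congr 1
        rw [_root_.mul_smul_comm, _root_.smul_mul_assoc, hc]
      rw [hErec k, hEk, hEkinv, hmid, hsum, Matrix.mul_inv_rev, Matrix.mul_inv_rev, hGinv]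
      conv_rhs => rw [_root_.mul_assoc]
  intro n
  obtain ⟨hMpd, hEn⟩ := main n
  have hEpd : (Eβ n).PosDef := by
    rw [hEn]
    have := myPosDef_conj hMpd.inv (hGunit (-((n:ℝ) * γ)))
    rwa [hGh] at this
  refine ⟨hEpd.isUnit, ?_, hMpd.isUnit, ?_⟩
  · have h2 := myPosDef_conj hEpd.inv (hGunit γ)
    rw [hGh] at h2
    exact (h2.add (myPosDef_smul hexp1 hCinv)).isUnit
  · rw [hΩβ, _root_.smul_mul_assoc, _root_.smul_mul_assoc]
    exact hEn
end

section
/- Let d ≥ 1, let C_π be a symmetric positive definite d×d real matrix, set Γ := C_π^{-1} + (1/2)I, let γ > 0, and let E_0 be symmetric positive definite. Define the sequence (E_n^α) by E_0^α := E_0 and the recursion E_{n+1}^α = ( e^{Γγ}(E_n^α)^{-1}e^{Γγ} + (e^{γ} − 1)C_π^{-1}e^{2γC_π^{-1}} )^{-1}. Then for every n ≥ 0 this recursion is well defined and E_n^α = e^{−nγΓ} ( E_0^{-1} + Ω^α C_π^{-1}( I − e^{−2nγΓ} ) )^{-1} e^{−nγΓ}, where Ω^α := (1 − e^{γ})( e^{−2γC_π^{-1}}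 − e^{γ}I )^{-1} = (1 − e^{γ})(I − e^{2γΓ})^{-1}e^{2γC_π^{-1}}. (This is the closed form of the covariance error of the Fisher–Rao-then-Wasserstein splitting scheme between Gaussians after n steps of size γ.) -/
open Matrix

namespace WFRAux

variable {d : ℕ}

local notation "Mat" => Matrix (Fin d) (Fin d) ℝ

lemma exp_smul_one (c : ℝ) :
    NormedSpace.exp (c • (1 : Mat)) = Real.exp c • (1 : Mat) := by
  letI : SeminormedRing Mat := Matrix.linftyOpSemiNormedRing
  letI : NormedRing Mat := Matrix.linftyOpNormedRing
  letI : NormedAlgebra ℝ Mat := Matrix.linftyOpNormedAlgebra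
  rw [← Algebra.algebraMap_eq_smul_one]
  erw [← NormedSpace.map_exp (algebraMap ℝ Mat) (continuous_algebraMap _ _)]
  rw [← Real.exp_eq_exp_ℝ, Algebra.algebraMap_eq_smul_one]

lemma commute_exp {X Y : Mat} (h : Commute X Y) :
    Commute X (NormedSpace.exp Y) := by
  letI : SeminormedRing Mat := Matrix.linftyOpSemiNormedRing
  letI : NormedRing Mat := Matrix.linftyOpNormedRing
  letI : NormedAlgebra ℝ Mat := Matrix.linftyOpNormedAlgebra
  exact h.exp_right

lemma commute_inv {X K : Mat} (h : Commute X K) (hK : IsUnit K) :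
    Commute X K⁻¹ := by
  have hKd : IsUnit K.det := (Matrix.isUnit_iff_isUnit_det _).mp hK
  have : K⁻¹ * X = X * K⁻¹ := by
    calc K⁻¹ * X = K⁻¹ * X * (K * K⁻¹) := by rw [Matrix.mul_nonsing_inv _ hKd, mul_one]
    _ = K⁻¹ * (X * K) * K⁻¹ := by noncomm_ring
    _ = K⁻¹ * (K * X) * K⁻¹ := by rw [← h.eq]
    _ = (K⁻¹ * K) * (X * K⁻¹) := by noncomm_ring
    _ = X * K⁻¹ := by rw [Matrix.nonsing_inv_mul _ hKd, one_mul]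
  exact this.symm

lemma posDef_conj {M B : Mat} (hM : M.PosDef) (hB : IsUnit B) :
    (Bᴴ * M * B).PosDef := by
  refine Matrix.posDef_iff_dotProduct_mulVec.mpr ⟨Matrix.isHermitian_conjTranspose_mul_mul B hM.1, fun x hx => ?_⟩
  have hBx : B *ᵥ x ≠ 0 := by
    have hinj := (Matrix.mulVec_injective_iff_isUnit).mpr hB
    intro hcon
    exact hx (by simpa using hinj (hcon.trans (by simp)))
  simpa only [star_mulVec, Matrix.dotProduct_mulVec, Matrix.vecMul_vecMul]
    using hM.dotProduct_mulVec_pos hBx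

lemma posDef_smul {M : Mat} (hM : M.PosDef) {c : ℝ} (hc : 0 < c) :
    (c • M).PosDef := by
  rw [Matrix.posDef_iff_dotProduct_mulVec]
  constructor
  · show (c • M)ᴴ = c • M
    rw [Matrix.conjTranspose_smul, star_trivial, hM.1.eq]
  · intro x hx
    have := hM.dotProduct_mulVec_pos hx
    rw [Matrix.smul_mulVec, dotProduct_smul]
    exact mul_pos hc this

lemma herm_smul {M : Mat} (hM : M.IsHermitian) (c : ℝ) : (c • M).IsHermitian := by
  show (c • M)ᴴ = c • M
  rw [Matrix.conjTranspose_smul, star_trivial, hM.eq]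

lemma posDef_exp {S : Mat} (hS : S.IsHermitian) :
    (NormedSpace.exp S).PosDef := by
  have hhalf : ((1/2 : ℝ) • S).IsHermitian := herm_smul hS _
  have hexp : NormedSpace.exp S
      = NormedSpace.exp ((1/2 : ℝ) • S) * NormedSpace.exp ((1/2 : ℝ) • S) := by
    rw [← Matrix.exp_add_of_commute _ _ (Commute.refl _), ← add_smul]
    norm_num
  have hP : (NormedSpace.exp ((1/2 : ℝ) • S)).IsHermitian := hhalf.exp
  rw [hexp, show NormedSpace.exp ((1/2 : ℝ) • S) * NormedSpace.exp ((1/2 : ℝ) • S)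
      = (NormedSpace.exp ((1/2 : ℝ) • S))ᴴ * (1 : Mat) * NormedSpace.exp ((1/2 : ℝ) • S) by
    rw [hP.eq, mul_one]]
  exact posDef_conj Matrix.PosDef.one (Matrix.isUnit_exp _)

lemma isUnit_exp_sub_smul_one {A : Mat} (hA : A.PosDef) {γ : ℝ} (hγ : 0 < γ) :
    IsUnit (NormedSpace.exp ((-(2*γ)) • A) - Real.exp γ • (1 : Mat)) := by
  classical
  have hH := hA.1
  set U : Mat := (hH.eigenvectorUnitary : Mat) with hU
  have hmem := (Matrix.IsHermitian.eigenvectorUnitary hH).2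
  have h1 : star U * U = 1 := (Matrix.mem_unitaryGroup_iff').mp hmem
  have h2 : U * star U = 1 := (Matrix.mem_unitaryGroup_iff).mp hmem
  have hUunit : IsUnit U := ⟨⟨U, star U, h2, h1⟩, rfl⟩
  have hUstarunit : IsUnit (star U) := ⟨⟨star U, U, h1, h2⟩, rfl⟩
  have hUinv : U⁻¹ = star U := Matrix.inv_eq_left_inv h1
  have hAeq : A = U * Matrix.diagonal hH.eigenvalues * U⁻¹ := by
    rw [hUinv]
    simpa [RCLike.ofReal_real_eq_id] using hH.spectral_theorem
  have hsm : (-(2*γ)) • A = U * Matrix.diagonal ((-(2*γ)) • hH.eigenvalues) * U⁻¹ := by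
    rw [Matrix.diagonal_smul, mul_smul_comm, smul_mul_assoc, ← hAeq]
  have hexp : NormedSpace.exp ((-(2*γ)) • A)
      = U * Matrix.diagonal (fun i => Real.exp ((-(2*γ)) * hH.eigenvalues i)) * U⁻¹ := by
    rw [hsm, Matrix.exp_conj U _ hUunit, Matrix.exp_diagonal, Pi.exp_def,
      ← Real.exp_eq_exp_ℝ]
    congr 1
  have hone : Real.exp γ • (1 : Mat)
      = U * Matrix.diagonal (fun _ => Real.exp γ) * U⁻¹ := by
    have : Matrix.diagonal (fun _ : Fin d => Real.exp γ) = Real.exp γ • (1 : Mat) := by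
      rw [Matrix.smul_one_eq_diagonal]
    rw [this, Matrix.mul_smul, mul_one, Matrix.smul_mul, hUinv, h2]
  have hdiff : NormedSpace.exp ((-(2*γ)) • A) - Real.exp γ • (1 : Mat)
      = U * Matrix.diagonal (fun i => Real.exp ((-(2*γ)) * hH.eigenvalues i) - Real.exp γ)
        * U⁻¹ := by
    rw [hexp, hone, ← Matrix.diagonal_sub, ← Matrix.sub_mul, ← Matrix.mul_sub]
  rw [hdiff, hUinv]
  refine (hUunit.mul ?_).mul hUstarunit
  rw [Matrix.isUnit_diagonal]
  have hne : ∀ i, Real.exp ((-(2*γ)) * hH.eigenvalues i) - Real.exp γ ≠ 0 := by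
    intro i
    have hev := hA.eigenvalues_pos i
    have hlt : (-(2*γ)) * hH.eigenvalues i < γ := by nlinarith
    have := Real.exp_lt_exp.mpr hlt
    linarith
  exact ⟨⟨_, fun i => (Real.exp ((-(2*γ)) * hH.eigenvalues i) - Real.exp γ)⁻¹,
    funext fun i => mul_inv_cancel₀ (hne i), funext fun i => inv_mul_cancel₀ (hne i)⟩, rfl⟩

end WFRAux

set_option maxHeartbeats 1000000 in
open WFRAux in
/-- Closed form of the covariance error of the Fisher–Rao-then-Wasserstein
splitting scheme between Gaussians after `n` steps of size `γ`, with
`Ω^α = (1 − e^γ)(e^{−2γC_π⁻¹} − e^γ I)⁻¹ = (1 − e^γ)(I − e^{2γΓ})⁻¹ e^{2γC_π⁻¹}`. -/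
theorem wfr_split_FRW_covariance_error_closed_form
    (d : ℕ) (hd : 1 ≤ d)
    (Cπ : Matrix (Fin d) (Fin d) ℝ) (hCπ : Cπ.PosDef)
    (Γ : Matrix (Fin d) (Fin d) ℝ) (hΓ : Γ = Cπ⁻¹ + (1 / 2 : ℝ) • 1)
    (γ : ℝ) (hγ : 0 < γ)
    (E₀ : Matrix (Fin d) (Fin d) ℝ) (hE₀ : E₀.PosDef)
    (Ωα : Matrix (Fin d) (Fin d) ℝ)
    (hΩα : Ωα = (1 - Real.exp γ) •
      (NormedSpace.exp ((-(2 * γ)) • Cπ⁻¹) - Real.exp γ • (1 : Matrix (Fin d) (Fin d) ℝ))⁻¹)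
    (Eα : ℕ → Matrix (Fin d) (Fin d) ℝ)
    (hE0 : Eα 0 = E₀)
    (hErec : ∀ n, Eα (n + 1) =
      (NormedSpace.exp (γ • Γ) * (Eα n)⁻¹ * NormedSpace.exp (γ • Γ)
        + (Real.exp γ - 1) • (Cπ⁻¹ * NormedSpace.exp ((2 * γ) • Cπ⁻¹)))⁻¹) :
    Ωα = (1 - Real.exp γ) •
      ((1 - NormedSpace.exp ((2 * γ) • Γ))⁻¹ * NormedSpace.exp ((2 * γ) • Cπ⁻¹)) ∧
    ∀ n : ℕ,
      IsUnit (Eα n) ∧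
      IsUnit (NormedSpace.exp (γ • Γ) * (Eα n)⁻¹ * NormedSpace.exp (γ • Γ)
        + (Real.exp γ - 1) • (Cπ⁻¹ * NormedSpace.exp ((2 * γ) • Cπ⁻¹))) ∧
      IsUnit (E₀⁻¹ + Ωα * Cπ⁻¹ * (1 - NormedSpace.exp ((-(2 * (n : ℝ) * γ)) • Γ))) ∧
      Eα n = NormedSpace.exp ((-((n : ℝ) * γ)) • Γ) *
        (E₀⁻¹ + Ωα * Cπ⁻¹ * (1 - NormedSpace.exp ((-(2 * (n : ℝ) * γ)) • Γ)))⁻¹ *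
        NormedSpace.exp ((-((n : ℝ) * γ)) • Γ) := by
  have hA : (Cπ⁻¹).PosDef := hCπ.inv
  set A := Cπ⁻¹ with hAdef
  have hAH : A.IsHermitian := hA.1
  have a1 : (1:ℝ) < Real.exp γ := by
    calc (1:ℝ) = Real.exp 0 := Real.exp_zero.symm
    _ < Real.exp γ := Real.exp_lt_exp.mpr hγ
  -- basic exp(t • A) facts
  have hfadd : ∀ s t : ℝ, NormedSpace.exp (s • A) * NormedSpace.exp (t • A)
      = NormedSpace.exp ((s + t) • A) := by
    intro s t
    rw [add_smul]
    exact (Matrix.exp_add_of_commute _ _ (((Commute.refl A).smul_left s).smul_right t)).symm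
  have hf0 : NormedSpace.exp ((0:ℝ) • A) = 1 := by
    rw [zero_smul]; exact NormedSpace.exp_zero
  have hfherm : ∀ t : ℝ, (NormedSpace.exp (t • A)).IsHermitian :=
    fun t => (herm_smul hAH t).exp
  have hfunit : ∀ t : ℝ, IsUnit (NormedSpace.exp (t • A)) :=
    fun t => Matrix.isUnit_exp _
  have hfcommA : ∀ t : ℝ, Commute A (NormedSpace.exp (t • A)) :=
    fun t => commute_exp ((Commute.refl A).smul_right t)
  have hfcomm : ∀ s t : ℝ, Commute (NormedSpace.exp (s • A)) (NormedSpace.exp (t • A)) := by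
    intro s t
    unfold Commute SemiconjBy
    rw [hfadd, hfadd, add_comm]
  -- Γ facts
  have hΓH : Γ.IsHermitian := by
    rw [hΓ]
    exact hAH.add (herm_smul Matrix.isHermitian_one _)
  have hΓexp : ∀ t : ℝ, NormedSpace.exp (t • Γ)
      = Real.exp (t/2) • NormedSpace.exp (t • A) := by
    intro t
    have h : t • Γ = t • A + (t/2) • (1 : Matrix (Fin d) (Fin d) ℝ) := by
      rw [hΓ, smul_add, smul_smul]
      congr 1
      ring
    rw [h, Matrix.exp_add_of_commute _ _ (((Commute.one_right (t • A))).smul_right (t/2)),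
      exp_smul_one, mul_smul_comm, mul_one]
  have hgadd : ∀ s t : ℝ, NormedSpace.exp (s • Γ) * NormedSpace.exp (t • Γ)
      = NormedSpace.exp ((s + t) • Γ) := by
    intro s t
    rw [add_smul]
    exact (Matrix.exp_add_of_commute _ _ (((Commute.refl Γ).smul_left s).smul_right t)).symm
  have hg0 : NormedSpace.exp ((0:ℝ) • Γ) = 1 := by
    rw [zero_smul]; exact NormedSpace.exp_zero
  -- the matrix K
  set K := NormedSpace.exp ((-(2 * γ)) • A) - Real.exp γ • (1 : Matrix (Fin d) (Fin d) ℝ)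
    with hKdef
  have hKunit : IsUnit K := isUnit_exp_sub_smul_one hA hγ
  have hKd : IsUnit K.det := (Matrix.isUnit_iff_isUnit_det _).mp hKunit
  have hKcommf : ∀ t : ℝ, Commute (NormedSpace.exp (t • A)) K := by
    intro t
    exact (hfcomm t _).sub_right ((Commute.one_right _).smul_right _)
  have hKicommf : ∀ t : ℝ, Commute (NormedSpace.exp (t • A)) K⁻¹ :=
    fun t => commute_inv (hKcommf t) hKunit
  have hKcommA : Commute A K :=
    (commute_exp ((Commute.refl A).smul_right _)).sub_right ((Commute.one_right _).smul_right _)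
  have hKicommA : Commute A K⁻¹ := commute_inv hKcommA hKunit
  have hΩcommf : ∀ t : ℝ, Commute (NormedSpace.exp (t • A)) Ωα := by
    intro t
    rw [hΩα]
    exact (hKicommf t).smul_right _
  have hΩcommA : Commute A Ωα := by
    rw [hΩα]
    exact hKicommA.smul_right _
  -- key algebraic identities
  have h1 : NormedSpace.exp ((2*γ) • A) * K
      = 1 - Real.exp γ • NormedSpace.exp ((2*γ) • A) := by
    rw [hKdef, mul_sub, hfadd, show 2*γ + -(2*γ) = (0:ℝ) by ring, hf0,
      mul_smul_comm, mul_one]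
  have hkey : Ωα * (Real.exp γ • NormedSpace.exp ((2*γ) • A) - 1)
      = (Real.exp γ - 1) • NormedSpace.exp ((2*γ) • A) := by
    have h2 : Real.exp γ • NormedSpace.exp ((2*γ) • A) - 1
        = -(NormedSpace.exp ((2*γ) • A) * K) := by
      rw [h1, neg_sub]
    rw [h2, hΩα, smul_mul_assoc, mul_neg, (hKcommf (2*γ)).eq, ← mul_assoc,
      Matrix.nonsing_inv_mul _ hKd, one_mul, smul_neg, ← neg_smul, neg_sub]
  -- inverse of exp((2γ)•A)
  have hinv2 : (NormedSpace.exp ((2*γ) • A))⁻¹ = NormedSpace.exp ((-(2*γ)) • A) := by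
    rw [show (-(2*γ)) • A = -((2*γ) • A) from neg_smul _ _, Matrix.exp_neg]
  -- the ★ identity
  have hassoc : ∀ P Q M : Matrix (Fin d) (Fin d) ℝ, P * (Q * M * Q) * P = (P*Q) * M * (Q*P) := by
    intros; noncomm_ring
  have hassoc2 : ∀ P Q X : Matrix (Fin d) (Fin d) ℝ, P * (Q * (X * Q)) * P = (P*Q) * X * (Q*P) := by
    intros; noncomm_ring
  have hstar : ∀ u s v w : ℝ, s = u + γ → v = -(2*u) → w = -(2*s) →
      NormedSpace.exp (s • Γ) *
        (Ωα * A * (NormedSpace.exp (v • Γ) - NormedSpace.exp (w • Γ))) *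
        NormedSpace.exp (s • Γ)
      = (Real.exp γ - 1) • (A * NormedSpace.exp ((2*γ) • A)) := by
    intro u s v w hs hv hw
    subst hs hv hw
    set s : ℝ := u + γ with hsdef
    have c1 : Commute (NormedSpace.exp (s • A)) (Ωα * A) :=
      (hΩcommf s).mul_right (hfcommA s).symm
    have hp1 : NormedSpace.exp (s • A) * (Ωα * A * NormedSpace.exp ((-(2*u)) • A)) *
        NormedSpace.exp (s • A) = Ωα * A * NormedSpace.exp ((2*γ) • A) := by
      rw [← mul_assoc (NormedSpace.exp (s • A)) (Ωα * A) _, c1.eq,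
        mul_assoc (Ωα * A) _ _, hfadd, mul_assoc (Ωα * A) _ _, hfadd,
        show s + -(2*u) + s = 2*γ by rw [hsdef]; ring]
    have hp2 : NormedSpace.exp (s • A) * (Ωα * A * NormedSpace.exp ((-(2*s)) • A)) *
        NormedSpace.exp (s • A) = Ωα * A := by
      rw [← mul_assoc (NormedSpace.exp (s • A)) (Ωα * A) _, c1.eq,
        mul_assoc (Ωα * A) _ _, hfadd, mul_assoc (Ωα * A) _ _, hfadd,
        show s + -(2*s) + s = (0:ℝ) by ring, hf0, mul_one]
    have hc1 : Real.exp (s/2) * Real.exp (s/2) * Real.exp (-(2*u)/2) = Real.exp γ := by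
      rw [← Real.exp_add, ← Real.exp_add]; congr 1; rw [hsdef]; ring
    have hc2 : Real.exp (s/2) * Real.exp (s/2) * Real.exp (-(2*s)/2) = (1:ℝ) := by
      rw [← Real.exp_add, ← Real.exp_add, show s/2 + s/2 + -(2*s)/2 = (0:ℝ) by ring,
        Real.exp_zero]
    calc NormedSpace.exp (s • Γ) *
          (Ωα * A * (NormedSpace.exp ((-(2*u)) • Γ) - NormedSpace.exp ((-(2*s)) • Γ))) *
          NormedSpace.exp (s • Γ)
        = (Real.exp (s/2) • NormedSpace.exp (s • A)) *
            (Ωα * A * (Real.exp (-(2*u)/2) • NormedSpace.exp ((-(2*u)) • A)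
              - Real.exp (-(2*s)/2) • NormedSpace.exp ((-(2*s)) • A))) *
            (Real.exp (s/2) • NormedSpace.exp (s • A)) := by
          rw [hΓexp s, hΓexp (-(2*u)), hΓexp (-(2*s))]
      _ = (Real.exp (s/2) * Real.exp (s/2)) •
            (NormedSpace.exp (s • A) *
              (Ωα * A * (Real.exp (-(2*u)/2) • NormedSpace.exp ((-(2*u)) • A)
                - Real.exp (-(2*s)/2) • NormedSpace.exp ((-(2*s)) • A))) *
              NormedSpace.exp (s • A)) := by
          rw [smul_mul_assoc, mul_smul_comm, smul_mul_assoc, smul_smul]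
      _ = (Real.exp (s/2) * Real.exp (s/2)) •
            (Real.exp (-(2*u)/2) •
              (NormedSpace.exp (s • A) * (Ωα * A * NormedSpace.exp ((-(2*u)) • A)) *
                NormedSpace.exp (s • A))
            - Real.exp (-(2*s)/2) •
              (NormedSpace.exp (s • A) * (Ωα * A * NormedSpace.exp ((-(2*s)) • A)) *
                NormedSpace.exp (s • A))) := by
          rw [mul_sub (Ωα * A) (Real.exp (-(2*u)/2) • NormedSpace.exp ((-(2*u)) • A))
              (Real.exp (-(2*s)/2) • NormedSpace.exp ((-(2*s)) • A)),
            mul_smul_comm (Real.exp (-(2*u)/2)) (Ωα * A) (NormedSpace.exp ((-(2*u)) • A)),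
            mul_smul_comm (Real.exp (-(2*s)/2)) (Ωα * A) (NormedSpace.exp ((-(2*s)) • A)),
            mul_sub (NormedSpace.exp (s • A)), sub_mul,
            mul_smul_comm (Real.exp (-(2*u)/2)) (NormedSpace.exp (s • A)),
            mul_smul_comm (Real.exp (-(2*s)/2)) (NormedSpace.exp (s • A)),
            smul_mul_assoc (Real.exp (-(2*u)/2)), smul_mul_assoc (Real.exp (-(2*s)/2))]
      _ = (Real.exp (s/2) * Real.exp (s/2)) •
            (Real.exp (-(2*u)/2) • (Ωα * A * NormedSpace.exp ((2*γ) • A))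
              - Real.exp (-(2*s)/2) • (Ωα * A)) := by rw [hp1, hp2]
      _ = Real.exp γ • (Ωα * A * NormedSpace.exp ((2*γ) • A)) - Ωα * A := by
          rw [smul_sub, smul_smul, smul_smul, hc1, hc2, one_smul]
      _ = Ωα * (A * (Real.exp γ • NormedSpace.exp ((2*γ) • A) - 1)) := by
          rw [mul_sub A (Real.exp γ • NormedSpace.exp ((2*γ) • A)) 1, mul_one,
            mul_sub Ωα, mul_smul_comm (Real.exp γ) A (NormedSpace.exp ((2*γ) • A)),
            mul_smul_comm (Real.exp γ) Ωα (A * NormedSpace.exp ((2*γ) • A)), ← mul_assoc]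
      _ = A * (Ωα * (Real.exp γ • NormedSpace.exp ((2*γ) • A) - 1)) := by
          rw [← mul_assoc, ← hΩcommA.eq, mul_assoc]
      _ = (Real.exp γ - 1) • (A * NormedSpace.exp ((2*γ) • A)) := by
          rw [hkey, mul_smul_comm]
  -- S is positive definite whenever X is
  have hSpos : ∀ X : Matrix (Fin d) (Fin d) ℝ, X.PosDef →
      (NormedSpace.exp (γ • Γ) * X⁻¹ * NormedSpace.exp (γ • Γ)
        + (Real.exp γ - 1) • (A * NormedSpace.exp ((2*γ) • A))).PosDef := by
    intro X hX
    have hgherm : (NormedSpace.exp (γ • Γ)).IsHermitian := (herm_smul hΓH γ).exp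
    apply Matrix.PosDef.add
    · have h := posDef_conj hX.inv (Matrix.isUnit_exp (γ • Γ))
      rwa [hgherm.eq] at h
    · apply posDef_smul _ (sub_pos.mpr a1)
      have hAe : (NormedSpace.exp (γ • A))ᴴ * A * NormedSpace.exp (γ • A)
          = A * NormedSpace.exp ((2*γ) • A) := by
        rw [(hfherm γ).eq, ← (hfcommA γ).eq, mul_assoc, hfadd, show γ + γ = 2*γ by ring]
      rw [← hAe]
      exact posDef_conj hA (hfunit γ)
  -- the main induction
  have main : ∀ n : ℕ, (Eα n).PosDef ∧
      (Eα n)⁻¹ = NormedSpace.exp (((n:ℝ) * γ) • Γ) *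
        (E₀⁻¹ + Ωα * A * (1 - NormedSpace.exp ((-(2 * (n:ℝ) * γ)) • Γ))) *
        NormedSpace.exp (((n:ℝ) * γ) • Γ) := by
    intro n
    induction n with
    | zero =>
      refine ⟨hE0 ▸ hE₀, ?_⟩
      rw [hE0, show ((0:ℕ):ℝ) * γ = (0:ℝ) by norm_num,
        show (-(2 * ((0:ℕ):ℝ) * γ)) = (0:ℝ) by norm_num, hg0, sub_self, mul_zero,
        add_zero, one_mul, mul_one]
    | succ n ih =>
      obtain ⟨hp, hid⟩ := ih
      have hS := hSpos (Eα n) hp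
      have hposn : (Eα (n+1)).PosDef := by rw [hErec n]; exact hS.inv
      refine ⟨hposn, ?_⟩
      have hSd : IsUnit (NormedSpace.exp (γ • Γ) * (Eα n)⁻¹ * NormedSpace.exp (γ • Γ)
          + (Real.exp γ - 1) • (A * NormedSpace.exp ((2*γ) • A))).det :=
        (Matrix.isUnit_iff_isUnit_det _).mp hS.isUnit
      have hinv : (Eα (n+1))⁻¹ = NormedSpace.exp (γ • Γ) * (Eα n)⁻¹ *
          NormedSpace.exp (γ • Γ)
          + (Real.exp γ - 1) • (A * NormedSpace.exp ((2*γ) • A)) := by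
        rw [hErec n, Matrix.nonsing_inv_nonsing_inv _ hSd]
      rw [hinv, hid]
      push_cast
      rw [hassoc, hgadd, hgadd, show γ + (n:ℝ) * γ = ((n:ℝ)+1) * γ by ring,
        show (n:ℝ) * γ + γ = ((n:ℝ)+1) * γ by ring]
      rw [show E₀⁻¹ + Ωα * A * (1 - NormedSpace.exp ((-(2 * ((n:ℝ)+1) * γ)) • Γ))
          = (E₀⁻¹ + Ωα * A * (1 - NormedSpace.exp ((-(2 * (n:ℝ) * γ)) • Γ)))
            + Ωα * A * (NormedSpace.exp ((-(2 * (n:ℝ) * γ)) • Γ)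
              - NormedSpace.exp ((-(2 * ((n:ℝ)+1) * γ)) • Γ)) by noncomm_ring]
      conv_rhs => rw [mul_add, add_mul]
      congr 1
      exact (hstar ((n:ℝ) * γ) (((n:ℝ)+1) * γ) (-(2 * (n:ℝ) * γ)) (-(2 * ((n:ℝ)+1) * γ))
        (by ring) (by ring) (by ring)).symm
  -- conclusions
  constructor
  · -- the alternative formula for Ωα
    rw [hΓexp (2*γ), show (2*γ)/2 = γ by ring, ← h1, Matrix.mul_inv_rev, hinv2,
      mul_assoc, hfadd, show -(2*γ) + 2*γ = (0:ℝ) by ring, hf0, mul_one, hΩα]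
  · intro n
    obtain ⟨hp, hid⟩ := main n
    have hXd : IsUnit (Eα n).det := (Matrix.isUnit_iff_isUnit_det _).mp hp.isUnit
    have hMeq : E₀⁻¹ + Ωα * A * (1 - NormedSpace.exp ((-(2 * (n:ℝ) * γ)) • Γ))
        = NormedSpace.exp ((-((n:ℝ) * γ)) • Γ) * (Eα n)⁻¹ *
          NormedSpace.exp ((-((n:ℝ) * γ)) • Γ) := by
      rw [hid, hassoc, hgadd, hgadd, show -((n:ℝ) * γ) + (n:ℝ) * γ = (0:ℝ) by ring,
        show (n:ℝ) * γ + -((n:ℝ) * γ) = (0:ℝ) by ring, hg0, one_mul, mul_one]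
    refine ⟨hp.isUnit, (hSpos _ hp).isUnit, ?_, ?_⟩
    · rw [hMeq]
      exact ((Matrix.isUnit_exp _).mul hp.inv.isUnit).mul (Matrix.isUnit_exp _)
    · have hPinv : (NormedSpace.exp ((-((n:ℝ) * γ)) • Γ))⁻¹
          = NormedSpace.exp (((n:ℝ) * γ) • Γ) := by
        refine Matrix.inv_eq_right_inv ?_
        rw [hgadd, show -((n:ℝ) * γ) + (n:ℝ) * γ = (0:ℝ) by ring, hg0]
      rw [hMeq, Matrix.mul_inv_rev, Matrix.mul_inv_rev, hPinv,
        Matrix.nonsing_inv_nonsing_inv _ hXd]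
      rw [hassoc2, hgadd, hgadd, show -((n:ℝ) * γ) + (n:ℝ) * γ = (0:ℝ) by ring,
        show (n:ℝ) * γ + -((n:ℝ) * γ) = (0:ℝ) by ring, hg0, one_mul, mul_one]
end

section
/- Let d ≥ 1, let C_π be a symmetric positive definite d×d real matrix, set Γ := C_π^{-1} + (1/2)I, let γ > 0, let n ≥ 1, and let E_0 be symmetric positive definite. Define Ω := (1/2)Γ^{-1}, Ω^β := (1 − e^{γ})(I − e^{2γΓ})^{-1}, Ω^α := (1 − e^{γ})(e^{−2γC_π^{-1}} − e^{γ}I)^{-1}, and J_n(B) := e^{−nγΓ} ( E_0^{-1} + B C_π^{-1}( I − e^{−2nγΓ} ) )^{-1} e^{−nγΓ}. Then each of the matrices E_n := J_n(Ω), E_n^β := J_n(Ω^β) and E_n^α := J_n(Ω^α) is well defined (the inverted matrices are invertible) and symmetric positive definite. -/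
open Matrix

section Aux

variable {d : ℕ}

private lemma posDef_conj_aux {M N : Matrix (Fin d) (Fin d) ℝ}
    (hM : M.PosDef) (hN : IsUnit N) : (N * M * Nᴴ).PosDef := by
  refine Matrix.PosDef.of_dotProduct_mulVec_pos ?_ ?_
  · exact isHermitian_mul_mul_conjTranspose N hM.1
  · intro x hx
    have hNH : IsUnit Nᴴ := by
      rw [Matrix.isUnit_iff_isUnit_det, Matrix.det_conjTranspose]
      exact ((Matrix.isUnit_iff_isUnit_det N).mp hN).star
    have hinj := Matrix.mulVec_injective_iff_isUnit.mpr hNH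
    have h0 : Nᴴ *ᵥ x ≠ 0 := fun h => hx (hinj (by simpa using h))
    have key := hM.dotProduct_mulVec_pos h0
    have hconv : N * M * Nᴴ = (Nᴴ)ᴴ * M * Nᴴ := by rw [conjTranspose_conjTranspose]
    rw [hconv]
    simpa only [star_mulVec, dotProduct_mulVec, vecMul_vecMul] using key

private lemma matrix_isUnit_of_mul_eq_one {A B : Matrix (Fin d) (Fin d) ℝ}
    (h : A * B = 1) : IsUnit A :=
  ⟨⟨A, B, h, mul_eq_one_comm.mp h⟩, rfl⟩

variable {U : Matrix (Fin d) (Fin d) ℝ}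

private lemma cd_congr {w w' : Fin d → ℝ} (h : ∀ i, w i = w' i) :
    U * diagonal w * star U = U * diagonal w' * star U := by
  rw [show w = w' from funext h]

private lemma cd_mul (h : star U * U = 1) (w w' : Fin d → ℝ) :
    (U * diagonal w * star U) * (U * diagonal w' * star U)
      = U * diagonal (fun i => w i * w' i) * star U := by
  simp only [mul_assoc]
  rw [← mul_assoc (star U) U, h, one_mul, ← mul_assoc (diagonal w), diagonal_mul_diagonal]

private lemma cd_one (h : U * star U = 1) :
    U * diagonal (fun _ : Fin d => (1 : ℝ)) * star U = 1 := by
  have hd : diagonal (fun _ : Fin d => (1 : ℝ)) = 1 := diagonal_one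
  rw [hd, mul_one, h]

private lemma cd_add (w w' : Fin d → ℝ) :
    (U * diagonal w * star U) + (U * diagonal w' * star U)
      = U * diagonal (fun i => w i + w' i) * star U := by
  have hd : diagonal (fun i => w i + w' i) = diagonal w + diagonal w' :=
    (diagonal_add w w').symm
  rw [hd, mul_add, add_mul]

private lemma cd_sub (w w' : Fin d → ℝ) :
    (U * diagonal w * star U) - (U * diagonal w' * star U)
      = U * diagonal (fun i => w i - w' i) * star U := by
  have hd : diagonal (fun i => w i - w' i) = diagonal w - diagonal w' :=
    (diagonal_sub w w').symm
  rw [hd, mul_sub, sub_mul]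

private lemma cd_smul (c : ℝ) (w : Fin d → ℝ) :
    c • (U * diagonal w * star U) = U * diagonal (fun i => c * w i) * star U := by
  have hd : diagonal (fun i => c * w i) = c • diagonal w := by
    rw [← diagonal_smul]; rfl
  rw [hd, mul_smul_comm, smul_mul_assoc]

private lemma cd_isUnit (h1 : U * star U = 1) (h2 : star U * U = 1)
    {w : Fin d → ℝ} (hw : ∀ i, w i ≠ 0) : IsUnit (U * diagonal w * star U) := by
  apply matrix_isUnit_of_mul_eq_one (B := U * diagonal (fun i => (w i)⁻¹) * star U)
  rw [cd_mul h2]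
  have : (fun i => w i * (w i)⁻¹) = fun _ : Fin d => (1 : ℝ) :=
    funext fun i => mul_inv_cancel₀ (hw i)
  rw [this, cd_one h1]

private lemma cd_inv (h1 : U * star U = 1) (h2 : star U * U = 1)
    {w : Fin d → ℝ} (hw : ∀ i, w i ≠ 0) :
    (U * diagonal w * star U)⁻¹ = U * diagonal (fun i => (w i)⁻¹) * star U := by
  apply inv_eq_right_inv
  rw [cd_mul h2]
  have : (fun i => w i * (w i)⁻¹) = fun _ : Fin d => (1 : ℝ) :=
    funext fun i => mul_inv_cancel₀ (hw i)
  rw [this, cd_one h1]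

private lemma cd_exp (h1 : U * star U = 1) (w : Fin d → ℝ) :
    NormedSpace.exp (U * diagonal w * star U)
      = U * diagonal (fun i => Real.exp (w i)) * star U := by
  have hUu : IsUnit U := matrix_isUnit_of_mul_eq_one h1
  have hinv : U⁻¹ = star U := inv_eq_right_inv h1
  rw [← hinv, Matrix.exp_conj U (diagonal w) hUu, Matrix.exp_diagonal, hinv]
  have hw : NormedSpace.exp w = fun i => Real.exp (w i) := by
    funext i; rw [Pi.coe_exp, ← Real.exp_eq_exp_ℝ]
  rw [hw]

private lemma cd_posDef (h1 : U * star U = 1)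
    {w : Fin d → ℝ} (hw : ∀ i, 0 < w i) : (U * diagonal w * star U).PosDef := by
  have hUu : IsUnit U := matrix_isUnit_of_mul_eq_one h1
  have := posDef_conj_aux (Matrix.PosDef.diagonal hw) hUu
  rwa [Matrix.star_eq_conjTranspose]

end Aux

/-- The covariance errors `J_n(Ω)`, `J_n(Ω^β)`, `J_n(Ω^α)` of the exact
WFR flow, the W-FR splitting and the FR-W splitting between Gaussians are well defined and
symmetric positive definite when `E₀ ≻ 0`. -/
theorem wfr_covariance_errors_posDef
    (d : ℕ) (hd : 1 ≤ d)
    (Cπ : Matrix (Fin d) (Fin d) ℝ) (hCπ : Cπ.PosDef)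
    (Γ : Matrix (Fin d) (Fin d) ℝ) (hΓ : Γ = Cπ⁻¹ + (1 / 2 : ℝ) • 1)
    (γ : ℝ) (hγ : 0 < γ)
    (n : ℕ) (hn : 1 ≤ n)
    (E₀ : Matrix (Fin d) (Fin d) ℝ) (hE₀ : E₀.PosDef)
    (Ω Ωβ Ωα : Matrix (Fin d) (Fin d) ℝ)
    (hΩ : Ω = (1 / 2 : ℝ) • Γ⁻¹)
    (hΩβ : Ωβ = (1 - Real.exp γ) • (1 - NormedSpace.exp ((2 * γ) • Γ))⁻¹)
    (hΩα : Ωα = (1 - Real.exp γ) •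
      (NormedSpace.exp ((-(2 * γ)) • Cπ⁻¹) - Real.exp γ • (1 : Matrix (Fin d) (Fin d) ℝ))⁻¹)
    (J : Matrix (Fin d) (Fin d) ℝ → Matrix (Fin d) (Fin d) ℝ)
    (hJ : ∀ B, J B = NormedSpace.exp ((-((n : ℝ) * γ)) • Γ) *
      (E₀⁻¹ + B * Cπ⁻¹ * (1 - NormedSpace.exp ((-(2 * (n : ℝ) * γ)) • Γ)))⁻¹ *
      NormedSpace.exp ((-((n : ℝ) * γ)) • Γ)) :
    IsUnit (1 - NormedSpace.exp ((2 * γ) • Γ)) ∧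
    IsUnit (NormedSpace.exp ((-(2 * γ)) • Cπ⁻¹)
      - Real.exp γ • (1 : Matrix (Fin d) (Fin d) ℝ)) ∧
    ∀ B ∈ ({Ω, Ωβ, Ωα} : Set (Matrix (Fin d) (Fin d) ℝ)),
      IsUnit (E₀⁻¹ + B * Cπ⁻¹ * (1 - NormedSpace.exp ((-(2 * (n : ℝ) * γ)) • Γ))) ∧
      (J B).PosDef := by
  classical
  have hA : (Cπ⁻¹).PosDef := hCπ.inv
  have hAH : (Cπ⁻¹).IsHermitian := hA.1
  set U : Matrix (Fin d) (Fin d) ℝ := (hAH.eigenvectorUnitary : Matrix (Fin d) (Fin d) ℝ)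
    with hUdef
  set v : Fin d → ℝ := hAH.eigenvalues with hvdef
  have hv : ∀ i, 0 < v i := fun i => hA.eigenvalues_pos i
  have hU1 : U * star U = 1 := mem_unitaryGroup_iff.mp hAH.eigenvectorUnitary.2
  have hU2 : star U * U = 1 := mem_unitaryGroup_iff'.mp hAH.eigenvectorUnitary.2
  have hspec : Cπ⁻¹ = U * diagonal v * star U := by
    have := hAH.spectral_theorem
    simpa [RCLike.ofReal_real_eq_id, Function.id_comp] using this
  have h1m : (1 : Matrix (Fin d) (Fin d) ℝ) = U * diagonal (fun _ : Fin d => (1 : ℝ)) * star U :=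
    (cd_one hU1).symm
  -- eigenvalues of Γ
  have hμ : ∀ i, 0 < v i + 1 / 2 := fun i => by have := hv i; linarith
  have eΓ : Γ = U * diagonal (fun i => v i + 1 / 2) * star U := by
    rw [hΓ, hspec, h1m, cd_smul, cd_add]
    exact cd_congr fun i => by ring
  -- useful scalar facts
  have hexp1 : (1 : ℝ) < Real.exp γ := Real.one_lt_exp_iff.mpr hγ
  -- first matrix : 1 - exp((2γ)Γ)
  have e1 : (1 : Matrix (Fin d) (Fin d) ℝ) - NormedSpace.exp ((2 * γ) • Γ)
      = U * diagonal (fun i => 1 - Real.exp (2 * γ * (v i + 1 / 2))) * star U := by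
    rw [eΓ, cd_smul, cd_exp hU1, h1m, cd_sub]
  have he1 : ∀ i, 1 - Real.exp (2 * γ * (v i + 1 / 2)) < 0 := by
    intro i
    have : (1 : ℝ) < Real.exp (2 * γ * (v i + 1 / 2)) :=
      Real.one_lt_exp_iff.mpr (by nlinarith [hμ i])
    linarith
  have hunit1 : IsUnit (1 - NormedSpace.exp ((2 * γ) • Γ)) := by
    rw [e1]; exact cd_isUnit hU1 hU2 (fun i => (he1 i).ne)
  -- second matrix : exp(-(2γ)Cπ⁻¹) - e^γ • 1
  have e2 : NormedSpace.exp ((-(2 * γ)) • Cπ⁻¹) - Real.exp γ • (1 : Matrix (Fin d) (Fin d) ℝ)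
      = U * diagonal (fun i => Real.exp (-(2 * γ) * v i) - Real.exp γ * 1) * star U := by
    rw [hspec, cd_smul, cd_exp hU1, h1m, cd_smul, cd_sub]
  have he2 : ∀ i, Real.exp (-(2 * γ) * v i) - Real.exp γ * 1 < 0 := by
    intro i
    have h1 : Real.exp (-(2 * γ) * v i) < 1 :=
      Real.exp_lt_one_iff.mpr (by nlinarith [hv i])
    linarith
  have hunit2 : IsUnit (NormedSpace.exp ((-(2 * γ)) • Cπ⁻¹)
      - Real.exp γ • (1 : Matrix (Fin d) (Fin d) ℝ)) := by
    rw [e2]; exact cd_isUnit hU1 hU2 (fun i => (he2 i).ne)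
  -- Ω
  have eΩ : Ω = U * diagonal (fun i => 1 / 2 * (v i + 1 / 2)⁻¹) * star U := by
    rw [hΩ, eΓ, cd_inv hU1 hU2 (fun i => (hμ i).ne'), cd_smul]
  have hΩpos : ∀ i, 0 < 1 / 2 * (v i + 1 / 2)⁻¹ := fun i =>
    mul_pos one_half_pos (inv_pos.mpr (hμ i))
  -- Ωβ
  have eΩβ : Ωβ = U * diagonal
      (fun i => (1 - Real.exp γ) * (1 - Real.exp (2 * γ * (v i + 1 / 2)))⁻¹) * star U := by
    rw [hΩβ, e1, cd_inv hU1 hU2 (fun i => (he1 i).ne), cd_smul]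
  have hΩβpos : ∀ i, 0 < (1 - Real.exp γ) * (1 - Real.exp (2 * γ * (v i + 1 / 2)))⁻¹ := by
    intro i
    exact mul_pos_of_neg_of_neg (by linarith) (inv_lt_zero.mpr (he1 i))
  -- Ωα
  have eΩα : Ωα = U * diagonal
      (fun i => (1 - Real.exp γ) * (Real.exp (-(2 * γ) * v i) - Real.exp γ * 1)⁻¹) * star U := by
    rw [hΩα, e2, cd_inv hU1 hU2 (fun i => (he2 i).ne), cd_smul]
  have hΩαpos : ∀ i, 0 < (1 - Real.exp γ) * (Real.exp (-(2 * γ) * v i) - Real.exp γ * 1)⁻¹ := by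
    intro i
    exact mul_pos_of_neg_of_neg (by linarith) (inv_lt_zero.mpr (he2 i))
  -- the matrix T = 1 - exp(-(2nγ)Γ)
  have eT : (1 : Matrix (Fin d) (Fin d) ℝ) - NormedSpace.exp ((-(2 * (n : ℝ) * γ)) • Γ)
      = U * diagonal (fun i => 1 - Real.exp (-(2 * (n : ℝ) * γ) * (v i + 1 / 2))) * star U := by
    rw [eΓ, cd_smul, cd_exp hU1, h1m, cd_sub]
  have hnR : (0 : ℝ) < (n : ℝ) := by exact_mod_cast Nat.lt_of_lt_of_le Nat.zero_lt_one hn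
  have hT : ∀ i, 0 < 1 - Real.exp (-(2 * (n : ℝ) * γ) * (v i + 1 / 2)) := by
    intro i
    have : Real.exp (-(2 * (n : ℝ) * γ) * (v i + 1 / 2)) < 1 :=
      Real.exp_lt_one_iff.mpr (mul_neg_of_neg_of_pos (by nlinarith [mul_pos hnR hγ]) (hμ i))
    linarith
  -- the matrix P = exp(-(nγ)Γ)
  have eP : NormedSpace.exp ((-((n : ℝ) * γ)) • Γ)
      = U * diagonal (fun i => Real.exp (-((n : ℝ) * γ) * (v i + 1 / 2))) * star U := by
    rw [eΓ, cd_smul, cd_exp hU1]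
  have hPpos : (NormedSpace.exp ((-((n : ℝ) * γ)) • Γ)).PosDef := by
    rw [eP]; exact cd_posDef hU1 (fun i => Real.exp_pos _)
  -- the key claim for a diagonalizable positive B
  have key : ∀ (B : Matrix (Fin d) (Fin d) ℝ) (b : Fin d → ℝ),
      B = U * diagonal b * star U → (∀ i, 0 < b i) →
      IsUnit (E₀⁻¹ + B * Cπ⁻¹ * (1 - NormedSpace.exp ((-(2 * (n : ℝ) * γ)) • Γ))) ∧
      (J B).PosDef := by
    intro B b hB hb
    have hprod : B * Cπ⁻¹ * (1 - NormedSpace.exp ((-(2 * (n : ℝ) * γ)) • Γ))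
        = U * diagonal
            (fun i => b i * v i * (1 - Real.exp (-(2 * (n : ℝ) * γ) * (v i + 1 / 2))))
          * star U := by
      rw [hB, hspec, eT, cd_mul hU2, cd_mul hU2]
    have hM : (E₀⁻¹ + B * Cπ⁻¹ * (1 - NormedSpace.exp ((-(2 * (n : ℝ) * γ)) • Γ))).PosDef := by
      rw [hprod]
      exact hE₀.inv.add (cd_posDef hU1 (fun i =>
        mul_pos (mul_pos (hb i) (hv i)) (hT i)))
    refine ⟨hM.isUnit, ?_⟩
    rw [hJ]
    have := posDef_conj_aux hM.inv hPpos.isUnit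
    rwa [hPpos.1.eq] at this
  refine ⟨hunit1, hunit2, ?_⟩
  intro B hB
  simp only [Set.mem_insert_iff, Set.mem_singleton_iff] at hB
  rcases hB with rfl | rfl | rfl
  · exact key _ _ eΩ hΩpos
  · exact key _ _ eΩβ hΩβpos
  · exact key _ _ eΩα hΩαpos
end

section
/- Let d ≥ 1, let C_π be a symmetric positive definite d×d real matrix, set Γ := C_π^{-1} + (1/2)I, let γ > 0, let n ≥ 1, let E_0 be a symmetric invertible d×d matrix, and define Ω := (1/2)Γ^{-1}, Ω^β := (1 − e^{γ})(I − e^{2γΓ})^{-1}, Ω^α := (1 − e^{γ})(e^{−2γC_π^{-1}} − e^{γ}I)^{-1}, and J_n(B) := e^{−nγΓ} ( E_0^{-1} + B C_π^{-1}( I − e^{−2nγΓ} ) )^{-1} e^{−nγΓ}. If B ∈ {Ω, Ω^β, Ω^α} and the symmetric matrix E_0^{-1} + B C_π^{-1} is negative definite, then for every n ≥ 1 the matrix E_0^{-1} + B C_π^{-1}(I − e^{−2nγΓ}) is negative definite (in particular invertible) and J_n(B) is symmetric negative definite. -/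
open Matrix

section WFRaux

variable {d : ℕ}

private lemma wfr_conj_posDef {A V : Matrix (Fin d) (Fin d) ℝ}
    (hA : A.PosDef) (hVH : IsUnit Vᴴ) : (V * A * Vᴴ).PosDef := by
  refine Matrix.PosDef.of_dotProduct_mulVec_pos ?_ ?_
  · show (V * A * Vᴴ)ᴴ = _
    rw [conjTranspose_mul, conjTranspose_mul, conjTranspose_conjTranspose, hA.1.eq, mul_assoc]
  · intro x hx
    have hy : Vᴴ *ᵥ x ≠ 0 := by
      intro h
      exact hx ((Matrix.mulVec_injective_iff_isUnit.mpr hVH) (by simpa using h))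
    have key : star x ⬝ᵥ (V * A * Vᴴ) *ᵥ x = star (Vᴴ *ᵥ x) ⬝ᵥ A *ᵥ (Vᴴ *ᵥ x) := by
      rw [star_mulVec, conjTranspose_conjTranspose, ← mulVec_mulVec, ← mulVec_mulVec,
        dotProduct_mulVec]
    rw [key]
    exact hA.dotProduct_mulVec_pos hy

variable {V : Matrix (Fin d) (Fin d) ℝ}

private lemma wfr_mulc (hV2 : Vᴴ * V = 1) (w w' : Fin d → ℝ) :
    (V * diagonal w * Vᴴ) * (V * diagonal w' * Vᴴ)
      = V * diagonal (fun i => w i * w' i) * Vᴴ := by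
  simp only [mul_assoc]
  rw [← mul_assoc Vᴴ V, hV2, one_mul, ← mul_assoc (diagonal w), diagonal_mul_diagonal]

private lemma wfr_invc (hV1 : V * Vᴴ = 1) (hV2 : Vᴴ * V = 1) {w : Fin d → ℝ}
    (hw : ∀ i, w i ≠ 0) :
    (V * diagonal w * Vᴴ)⁻¹ = V * diagonal (fun i => (w i)⁻¹) * Vᴴ := by
  apply inv_eq_right_inv
  rw [wfr_mulc hV2]
  have : (fun i => w i * (w i)⁻¹) = fun _ : Fin d => (1 : ℝ) :=
    funext fun i => mul_inv_cancel₀ (hw i)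
  rw [this, show (diagonal (fun _ : Fin d => (1:ℝ))) = 1 from diagonal_one, mul_one, hV1]

private lemma wfr_isUnit (hV1 : V * Vᴴ = 1) : IsUnit V ∧ IsUnit Vᴴ := by
  have hd : V.det * Vᴴ.det = 1 := by rw [← det_mul, hV1, det_one]
  exact ⟨(isUnit_iff_isUnit_det _).mpr (IsUnit.of_mul_eq_one _ hd),
    (isUnit_iff_isUnit_det _).mpr (IsUnit.of_mul_eq_one _ (by rwa [mul_comm] at hd))⟩

private lemma wfr_expc (hV1 : V * Vᴴ = 1) (w : Fin d → ℝ) :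
    NormedSpace.exp (V * diagonal w * Vᴴ)
      = V * diagonal (fun i => Real.exp (w i)) * Vᴴ := by
  have hVinv : V⁻¹ = Vᴴ := inv_eq_right_inv hV1
  rw [← hVinv, Matrix.exp_conj V (diagonal w) (wfr_isUnit hV1).1, Matrix.exp_diagonal]
  congr 2
  rw [Pi.exp_def]
  funext i
  rw [← Real.exp_eq_exp_ℝ]

private lemma wfr_smulc (s : ℝ) (w : Fin d → ℝ) :
    s • (V * diagonal w * Vᴴ) = V * diagonal (fun i => s * w i) * Vᴴ := by
  rw [show diagonal (fun i => s * w i) = s • diagonal w by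
    rw [← diagonal_smul]; rfl]
  simp [Matrix.smul_mul, Matrix.mul_smul]

private lemma wfr_addc (w w' : Fin d → ℝ) :
    (V * diagonal w * Vᴴ) + (V * diagonal w' * Vᴴ)
      = V * diagonal (fun i => w i + w' i) * Vᴴ := by
  rw [← add_mul, ← mul_add, ← diagonal_add]

private lemma wfr_subc (w w' : Fin d → ℝ) :
    (V * diagonal w * Vᴴ) - (V * diagonal w' * Vᴴ)
      = V * diagonal (fun i => w i - w' i) * Vᴴ := by
  rw [← sub_mul, ← mul_sub, ← diagonal_sub]

private lemma wfr_onec (hV1 : V * Vᴴ = 1) :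
    (1 : Matrix (Fin d) (Fin d) ℝ) = V * diagonal (fun _ => (1:ℝ)) * Vᴴ := by
  rw [show (diagonal (fun _ : Fin d => (1:ℝ))) = 1 from diagonal_one, mul_one, hV1]

private lemma wfr_posc (hV2 : Vᴴ * V = 1) {w : Fin d → ℝ} (hw : ∀ i, 0 < w i) :
    (V * diagonal w * Vᴴ).PosDef :=
  wfr_conj_posDef (Matrix.PosDef.diagonal hw)
    (wfr_isUnit (V := Vᴴ) (by rwa [conjTranspose_conjTranspose])).1

end WFRaux

/-- If `E₀⁻¹ + B C_π⁻¹ ≺ 0` for `B ∈ {Ω, Ω^β, Ω^α}`, then for every `n ≥ 1`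
the matrix `E₀⁻¹ + B C_π⁻¹(I − e^{−2nγΓ})` is negative definite and `J_n(B)` is symmetric
negative definite.  Negative definiteness of `A` is expressed as `(-A).PosDef`. -/
theorem wfr_covariance_errors_negDef
    (d : ℕ) (hd : 1 ≤ d)
    (Cπ : Matrix (Fin d) (Fin d) ℝ) (hCπ : Cπ.PosDef)
    (Γ : Matrix (Fin d) (Fin d) ℝ) (hΓ : Γ = Cπ⁻¹ + (1 / 2 : ℝ) • 1)
    (γ : ℝ) (hγ : 0 < γ)
    (E₀ : Matrix (Fin d) (Fin d) ℝ) (hE₀s : E₀.IsSymm) (hE₀u : IsUnit E₀)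
    (Ω Ωβ Ωα : Matrix (Fin d) (Fin d) ℝ)
    (hΩ : Ω = (1 / 2 : ℝ) • Γ⁻¹)
    (hΩβ : Ωβ = (1 - Real.exp γ) • (1 - NormedSpace.exp ((2 * γ) • Γ))⁻¹)
    (hΩα : Ωα = (1 - Real.exp γ) •
      (NormedSpace.exp ((-(2 * γ)) • Cπ⁻¹) - Real.exp γ • (1 : Matrix (Fin d) (Fin d) ℝ))⁻¹)
    (J : ℕ → Matrix (Fin d) (Fin d) ℝ → Matrix (Fin d) (Fin d) ℝ)
    (hJ : ∀ n B, J n B = NormedSpace.exp ((-((n : ℝ) * γ)) • Γ) *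
      (E₀⁻¹ + B * Cπ⁻¹ * (1 - NormedSpace.exp ((-(2 * (n : ℝ) * γ)) • Γ)))⁻¹ *
      NormedSpace.exp ((-((n : ℝ) * γ)) • Γ))
    (B : Matrix (Fin d) (Fin d) ℝ)
    (hB : B = Ω ∨ B = Ωβ ∨ B = Ωα)
    (hneg : (-(E₀⁻¹ + B * Cπ⁻¹)).PosDef) :
    ∀ n : ℕ, 1 ≤ n →
      (-(E₀⁻¹ + B * Cπ⁻¹ * (1 - NormedSpace.exp ((-(2 * (n : ℝ) * γ)) • Γ)))).PosDef ∧
      IsUnit (E₀⁻¹ + B * Cπ⁻¹ * (1 - NormedSpace.exp ((-(2 * (n : ℝ) * γ)) • Γ))) ∧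
      (-(J n B)).PosDef := by
  intro n hn
  obtain ⟨V, μ, hV1, hV2, hμ, rCπ⟩ :
      ∃ (V : Matrix (Fin d) (Fin d) ℝ) (μ : Fin d → ℝ),
        V * Vᴴ = 1 ∧ Vᴴ * V = 1 ∧ (∀ i, 0 < μ i) ∧ Cπ = V * diagonal μ * Vᴴ := by
    have ih := hCπ.1
    refine ⟨ih.eigenvectorUnitary, ih.eigenvalues, ?_, ?_, fun i => hCπ.eigenvalues_pos i, ?_⟩
    · simpa [Matrix.star_eq_conjTranspose] using
        Matrix.mem_unitaryGroup_iff.mp ih.eigenvectorUnitary.2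
    · simpa [Matrix.star_eq_conjTranspose] using
        Matrix.mem_unitaryGroup_iff'.mp ih.eigenvectorUnitary.2
    · simpa [Matrix.star_eq_conjTranspose, Function.comp] using ih.spectral_theorem
  obtain ⟨g, hgdef⟩ : ∃ g : Fin d → ℝ, g = fun i => (μ i)⁻¹ + 1 / 2 := ⟨_, rfl⟩
  have hgpos : ∀ i, 0 < g i := by
    intro i; rw [hgdef]
    have := hμ i; positivity
  have rCπi : Cπ⁻¹ = V * diagonal (fun i => (μ i)⁻¹) * Vᴴ := by
    rw [rCπ, wfr_invc hV1 hV2 (fun i => (hμ i).ne')]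
  have rΓ : Γ = V * diagonal g * Vᴴ := by
    rw [hΓ, rCπi]
    nth_rewrite 1 [wfr_onec hV1 (V := V)]
    rw [wfr_smulc, wfr_addc]
    congr 1
    · congr 1
      funext i
      rw [hgdef]
      norm_num
  have rexp : ∀ s : ℝ, NormedSpace.exp (s • Γ)
      = V * diagonal (fun i => Real.exp (s * g i)) * Vᴴ := by
    intro s
    rw [rΓ, wfr_smulc, wfr_expc hV1]
  have h1γ : (1 : ℝ) < Real.exp γ := by
    rw [← Real.exp_zero]; exact Real.exp_lt_exp.mpr hγ
  -- representation of B
  obtain ⟨w, hw, rB⟩ :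
      ∃ w : Fin d → ℝ, (∀ i, 0 < w i) ∧ B = V * diagonal w * Vᴴ := by
    rcases hB with rfl | rfl | rfl
    · refine ⟨fun i => (1 / 2 : ℝ) * (g i)⁻¹, fun i => by
        have := hgpos i; positivity, ?_⟩
      rw [hΩ, rΓ, wfr_invc hV1 hV2 (fun i => (hgpos i).ne'), wfr_smulc]
    · have hlt : ∀ i, (1 : ℝ) < Real.exp (2 * γ * g i) := by
        intro i; rw [← Real.exp_zero]
        exact Real.exp_lt_exp.mpr (by have := hgpos i; positivity)
      refine ⟨fun i => (1 - Real.exp γ) * (1 - Real.exp (2 * γ * g i))⁻¹, fun i => by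
        have h1 := hlt i
        exact mul_pos_of_neg_of_neg (by linarith) (inv_lt_zero.mpr (by linarith)), ?_⟩
      rw [hΩβ, rexp (2 * γ)]
      nth_rewrite 1 [wfr_onec hV1 (V := V)]
      rw [wfr_subc, wfr_invc hV1 hV2 (fun i => by have := hlt i; intro h;linarith [h]), wfr_smulc]
    · have hlt : ∀ i, Real.exp (-(2 * γ) * (μ i)⁻¹) < 1 := by
        intro i; rw [← Real.exp_zero]
        refine Real.exp_lt_exp.mpr ?_
        have h1 := hμ i
        have : 0 < 2 * γ * (μ i)⁻¹ := by positivity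
        linarith
      refine ⟨fun i => (1 - Real.exp γ) *
          (Real.exp (-(2 * γ) * (μ i)⁻¹) - Real.exp γ * 1)⁻¹, fun i => by
        have h1 := hlt i
        exact mul_pos_of_neg_of_neg (by linarith) (inv_lt_zero.mpr (by linarith)), ?_⟩
      rw [hΩα, rCπi, wfr_smulc, wfr_expc hV1]
      nth_rewrite 1 [wfr_onec hV1 (V := V)]
      rw [wfr_smulc, wfr_subc, wfr_invc hV1 hV2 (fun i => by
        have h1 := hlt i; intro h; nlinarith), wfr_smulc]
  -- positive definiteness of the correction term
  have hX : (B * Cπ⁻¹ * (NormedSpace.exp ((-(2 * (n : ℝ) * γ)) • Γ))).PosDef := by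
    rw [rB, rCπi, rexp, wfr_mulc hV2, wfr_mulc hV2]
    refine wfr_posc hV2 fun i => ?_
    have h1 := hw i
    have h2 := hμ i
    positivity
  have hr : -(E₀⁻¹ + B * Cπ⁻¹ * (1 - NormedSpace.exp ((-(2 * (n : ℝ) * γ)) • Γ)))
      = -(E₀⁻¹ + B * Cπ⁻¹) + B * Cπ⁻¹ * (NormedSpace.exp ((-(2 * (n : ℝ) * γ)) • Γ)) := by
    noncomm_ring
  have hSd : (-(E₀⁻¹ + B * Cπ⁻¹ * (1 - NormedSpace.exp ((-(2 * (n : ℝ) * γ)) • Γ)))).PosDef := by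
    rw [hr]; exact hneg.add hX
  have hSu : IsUnit (E₀⁻¹ + B * Cπ⁻¹ * (1 - NormedSpace.exp ((-(2 * (n : ℝ) * γ)) • Γ))) := by
    have := hSd.isUnit.neg
    rwa [neg_neg] at this
  refine ⟨hSd, hSu, ?_⟩
  have hE : (NormedSpace.exp ((-((n : ℝ) * γ)) • Γ)).PosDef := by
    rw [rexp]; exact wfr_posc hV2 fun i => Real.exp_pos _
  have hinv : (E₀⁻¹ + B * Cπ⁻¹ * (1 - NormedSpace.exp ((-(2 * (n : ℝ) * γ)) • Γ)))⁻¹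
      = -((-(E₀⁻¹ + B * Cπ⁻¹ * (1 - NormedSpace.exp ((-(2 * (n : ℝ) * γ)) • Γ))))⁻¹) := by
    apply inv_eq_right_inv
    rw [mul_neg, ← neg_mul]
    exact mul_nonsing_inv _ ((isUnit_iff_isUnit_det _).mp hSd.isUnit)
  rw [hJ, hinv, mul_neg, neg_mul, neg_neg]
  have hEH : IsUnit (NormedSpace.exp ((-((n : ℝ) * γ)) • Γ))ᴴ := by
    rw [hE.1.eq]; exact hE.isUnit
  have := wfr_conj_posDef hSd.inv hEH
  rwa [hE.1.eq] at this
end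

section
/- Let b > 0 and α_π > 0 with α_π > 2b², and define g(τ) := (1/b)·arctan( (1 − e^{−τ})·α_π/(2b) ) for τ ≥ 0. Then there exists τ > 0 such that g(τ) = τ. (This guarantees a strictly positive uniform admissible step size threshold in the proof that the Wasserstein–Fisher–Rao flow preserves log-concavity uniformly in time, under the condition b² < α_π/2.) -/
open Real

/-- If `b > 0`, `α_π > 0` and `α_π > 2b²`, then the map
`g(τ) = (1/b)·arctan((1 − e^{−τ})·α_π/(2b))` has a strictly positive fixed point. -/
theorem positive_fixed_point_step_size_threshold
    (b απ : ℝ) (hb : 0 < b) (hαπ : 0 < απ) (h : 2 * b ^ 2 < απ)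
    (g : ℝ → ℝ) (hg : ∀ τ, g τ = (1 / b) * arctan ((1 - exp (-τ)) * απ / (2 * b))) :
    ∃ τ : ℝ, 0 < τ ∧ g τ = τ := by
  set G : ℝ → ℝ := fun τ => (1 / b) * arctan ((1 - exp (-τ)) * απ / (2 * b)) with hG
  have hb2 : (0:ℝ) < 2 * b := by linarith
  -- derivative of inner function at 0
  have hu : HasDerivAt (fun τ : ℝ => (1 - exp (-τ)) * απ / (2 * b))
      (απ / (2 * b)) 0 := by
    have h1 : HasDerivAt (fun τ : ℝ => exp (-τ)) (-1) 0 := by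
      simpa using (hasDerivAt_neg (0:ℝ)).exp
    have h2 : HasDerivAt (fun τ : ℝ => 1 - exp (-τ)) 1 0 := by
      have h3 := (hasDerivAt_const (0:ℝ) (1:ℝ)).sub h1
      rw [zero_sub, neg_neg] at h3
      exact h3
    have := (h2.mul_const απ).div_const (2 * b)
    simpa using this
  have hu0 : (1 - exp (-(0:ℝ))) * απ / (2 * b) = 0 := by simp
  have hGder : HasDerivAt G (απ / (2 * b ^ 2)) 0 := by
    have harc : HasDerivAt arctan
        (1 / (1 + ((1 - exp (-(0:ℝ))) * απ / (2 * b)) ^ 2))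
        ((1 - exp (-(0:ℝ))) * απ / (2 * b)) := Real.hasDerivAt_arctan _
    have hcomp := harc.comp 0 hu
    simp only [Function.comp_def] at hcomp
    have hmul := hcomp.const_mul (1 / b)
    refine hmul.congr_deriv ?_
    rw [hu0]
    field_simp
    norm_num
  set F : ℝ → ℝ := fun τ => G τ - τ with hF
  have hFder : HasDerivAt F (απ / (2 * b ^ 2) - 1) 0 := hGder.sub (hasDerivAt_id 0)
  have hF0 : F 0 = 0 := by simp [hF, hG]
  have hdpos : 0 < απ / (2 * b ^ 2) - 1 := by
    have : (0:ℝ) < 2 * b ^ 2 := by positivity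
    rw [sub_pos, lt_div_iff₀ this]; linarith
  -- find τ₀ > 0 with F τ₀ > 0, via slope
  have hslope := hasDerivAt_iff_tendsto_slope.mp hFder
  have hslope' : Filter.Tendsto (slope F 0) (nhdsWithin 0 (Set.Ioi 0))
      (nhds (απ / (2 * b ^ 2) - 1)) :=
    hslope.mono_left (nhdsWithin_mono 0 (fun x hx => ne_of_gt hx))
  have hev : ∀ᶠ τ in nhdsWithin (0:ℝ) (Set.Ioi 0), 0 < slope F 0 τ :=
    hslope'.eventually (eventually_gt_nhds hdpos)
  have hev2 : ∀ᶠ τ in nhdsWithin (0:ℝ) (Set.Ioi 0), (0:ℝ) < τ :=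
    eventually_mem_nhdsWithin.mono (fun x hx => hx)
  obtain ⟨τ₀, hs, hτ₀⟩ := (hev.and hev2).exists
  have hFτ₀ : 0 < F τ₀ := by
    have : slope F 0 τ₀ = F τ₀ / τ₀ := by simp [slope_def_field, hF0]
    rw [this] at hs
    exact (div_pos_iff.mp hs).resolve_right (fun ⟨_, h2⟩ => absurd hτ₀ (not_lt.mpr h2.le)) |>.1
  -- upper bound point
  set T : ℝ := max τ₀ (π / (2 * b)) + 1 with hT
  have hτ₀T : τ₀ ≤ T := by
    have h1 := le_max_left τ₀ (π / (2 * b)); simp only [hT]; linarith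
  have hFT : F T < 0 := by
    have h1 : G T < π / (2 * b) := by
      have := arctan_lt_pi_div_two ((1 - exp (-T)) * απ / (2 * b))
      have hb1 : (0:ℝ) < 1 / b := by positivity
      calc G T < (1 / b) * (π / 2) := by exact mul_lt_mul_of_pos_left this hb1
        _ = π / (2 * b) := by ring
    have h2 : π / (2 * b) < T := by
      have := le_max_right τ₀ (π / (2 * b)); linarith
    exact sub_neg.mpr (h1.trans h2)
  -- IVT
  have hcont : ContinuousOn F (Set.Icc τ₀ T) := by
    apply ContinuousOn.sub _ continuousOn_id
    exact ((continuous_const.mul (continuous_arctan.comp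
      (((continuous_const.sub ((Real.continuous_exp.comp continuous_neg))).mul
        continuous_const).div_const _)))).continuousOn
  have h0mem : (0:ℝ) ∈ Set.Icc (F T) (F τ₀) := ⟨hFT.le, hFτ₀.le⟩
  obtain ⟨c, hc, hFc⟩ := intermediate_value_Icc' hτ₀T hcont h0mem
  refine ⟨c, lt_of_lt_of_le hτ₀ hc.1, ?_⟩
  have h2 : G c = c := by
    have h3 : G c - c = 0 := hFc
    linarith
  rw [hg c]
  exact h2
end

section
/- Let b ≥ 0 and α_π > 0 with b² < α_π/2, and let c_0 > 0. Set Δ := √(1 + 4(α_π/2 − b²)), c_{∞,1} := (−1 + Δ)/2, c_{∞,2} := (−1 − Δ)/2 and l_0 := (c_0 − c_{∞,1})/(c_0 − c_{∞,2}). Define c(t) := ( c_{∞,1} − c_{∞,2}·l_0·e^{−t(c_{∞,1} − c_{∞,2})} ) / ( 1 − l_0·e^{−t(c_{∞,1} − c_{∞,2})} ) for t ≥ 0. Then |l_0| < 1, the denominator 1 − l_0 e^{−t(c_{∞,1}−c_{∞,2})} is nonzero for all t ≥ 0, c(0) = c_0, and for every t ≥ 0 the function c is differentiable at t with c'(t)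 = −c(t)² − c(t) − b² + α_π/2. (This explicit Riccati solution yields the uniform-in-time log-concavity constant α_t = α_π/2 + c(t) of the Wasserstein–Fisher–Rao flow in the paper's main log-concavity theorem.) -/
open Real

lemma riccati_aux (c₁ c₂ l₀ E b απ : ℝ) (hD : 1 - l₀ * E ≠ 0)
    (hsum : c₁ + c₂ = -1) (hprod : c₁ * c₂ = b ^ 2 - απ / 2) :
    -((c₁ - c₂ * l₀ * E) / (1 - l₀ * E)) ^ 2 - (c₁ - c₂ * l₀ * E) / (1 - l₀ * E)
      - b ^ 2 + απ / 2
    = ((0 - c₂ * l₀ * (E * -(c₁ - c₂))) * (1 - l₀ * E)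
        - (c₁ - c₂ * l₀ * E) * (0 - l₀ * (E * -(c₁ - c₂)))) / (1 - l₀ * E) ^ 2 := by
  have hc2 : c₂ = -1 - c₁ := by linarith
  subst hc2
  have hb2 : b ^ 2 = c₁ * (-1 - c₁) + απ / 2 := by linarith
  rw [hb2]
  field_simp
  ring

/-- Explicit solution of the Riccati equation
`c' = −c² − c − b² + α_π/2` in terms of the two real roots
`c_{∞,1} > 0 > c_{∞,2}` of the quadratic, yielding the uniform-in-time log-concavity
constant of the Wasserstein–Fisher–Rao flow. -/
theorem riccati_uniform_log_concavity_solution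
    (b απ c₀ : ℝ) (hb : 0 ≤ b) (hαπ : 0 < απ) (hbαπ : b ^ 2 < απ / 2) (hc₀ : 0 < c₀)
    (Δ c₁ c₂ l₀ : ℝ)
    (hΔ : Δ = Real.sqrt (1 + 4 * (απ / 2 - b ^ 2)))
    (hc₁ : c₁ = (-1 + Δ) / 2) (hc₂ : c₂ = (-1 - Δ) / 2)
    (hl₀ : l₀ = (c₀ - c₁) / (c₀ - c₂))
    (c : ℝ → ℝ)
    (hc : ∀ t, c t = (c₁ - c₂ * l₀ * exp (-t * (c₁ - c₂))) /
      (1 - l₀ * exp (-t * (c₁ - c₂)))) :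
    |l₀| < 1 ∧
    (∀ t : ℝ, 0 ≤ t → 1 - l₀ * exp (-t * (c₁ - c₂)) ≠ 0) ∧
    c 0 = c₀ ∧
    (∀ t : ℝ, 0 ≤ t →
      HasDerivAt c (-(c t) ^ 2 - c t - b ^ 2 + απ / 2) t) := by
  have hΔsq : Δ ^ 2 = 1 + 4 * (απ / 2 - b ^ 2) := by
    rw [hΔ, sq_sqrt (by nlinarith)]
  have hΔnn : 0 ≤ Δ := hΔ ▸ Real.sqrt_nonneg _
  have hΔ1 : 1 < Δ := by nlinarith
  have hc₂neg : c₂ < 0 := by rw [hc₂]; linarith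
  have hc₁pos : 0 < c₁ := by rw [hc₁]; linarith
  have hden0 : 0 < c₀ - c₂ := by linarith
  have hdiff : c₁ - c₂ = Δ := by rw [hc₁, hc₂]; ring
  have hsum : c₁ + c₂ = -1 := by rw [hc₁, hc₂]; ring
  have hprod : c₁ * c₂ = b ^ 2 - απ / 2 := by
    rw [hc₁, hc₂]; nlinarith [hΔsq]
  have hl : |l₀| < 1 := by
    rw [hl₀, abs_div, abs_of_pos hden0, div_lt_one hden0, abs_lt]
    constructor <;> nlinarith
  have hdne : ∀ t : ℝ, 0 ≤ t → 1 - l₀ * exp (-t * (c₁ - c₂)) ≠ 0 := by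
    intro t ht
    have hE1 : exp (-t * (c₁ - c₂)) ≤ 1 := by
      rw [Real.exp_le_one_iff, hdiff]; nlinarith
    have hEpos : 0 < exp (-t * (c₁ - c₂)) := Real.exp_pos _
    have : l₀ * exp (-t * (c₁ - c₂)) < 1 := by
      calc l₀ * exp (-t * (c₁ - c₂)) ≤ |l₀| * exp (-t * (c₁ - c₂)) :=
            mul_le_mul_of_nonneg_right (le_abs_self _) hEpos.le
        _ ≤ |l₀| * 1 := by nlinarith [abs_nonneg l₀]
        _ < 1 := by linarith
    linarith
  refine ⟨hl, hdne, ?_, ?_⟩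
  · have h2 : (1:ℝ) - l₀ ≠ 0 := by
      have := abs_lt.mp hl
      linarith [this.2]
    rw [hc 0]
    simp only [neg_zero, zero_mul, Real.exp_zero, mul_one]
    rw [hl₀] at h2 ⊢
    rw [div_eq_iff h2]
    field_simp
    ring
  · intro t ht
    have hDne := hdne t ht
    have h1 : HasDerivAt (fun t : ℝ => -t * (c₁ - c₂)) (-(c₁ - c₂)) t := by
      simpa using ((hasDerivAt_id t).neg.mul_const (c₁ - c₂))
    have hE : HasDerivAt (fun t : ℝ => exp (-t * (c₁ - c₂)))
        (exp (-t * (c₁ - c₂)) * (-(c₁ - c₂))) t := h1.exp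
    have hN := (hasDerivAt_const t c₁).sub (hE.const_mul (c₂ * l₀))
    have hD := (hasDerivAt_const t 1).sub (hE.const_mul l₀)
    have hQ := hN.div hD hDne
    have hfun : c = fun t : ℝ => (c₁ - c₂ * l₀ * exp (-t * (c₁ - c₂))) /
        (1 - l₀ * exp (-t * (c₁ - c₂))) := funext hc
    rw [hfun]
    refine hQ.congr_deriv ?_
    exact (riccati_aux c₁ c₂ l₀ (exp (-t * (c₁ - c₂))) b απ hDne hsum hprod).symm
end
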